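/- arXiv:1210.4324 — 7 statements merged into one kernel-verified Lean document; each statement's English description precedes it below -/
import Mathlib

section
/- Let γ : S¹ → V be a C¹ immersed closed curve in a finite-dimensional inner product space V, with length |Γ| = ∫_{S¹} ‖dγ‖, and let c = (1/|Γ|) ∫_{S¹} γ ‖dγ‖ be its center of mass. Then the area of the cone K(Γ) over Γ with vertex c satisfies |Γ|² ≥ 4π |K(Γ)|. -/
open MeasureTheory Set AddCircle intervalIntegral ContinuousMap
open scoped Real

section parseval
variable {T : ℝ} [hT : Fact (0 < T)]

lemma parseval_cont (f : ℝ → ℂ) (hc : Continuous f) (hper : Function.Periodic f T) :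
    (Summable fun n : ℤ => ‖fourierCoeff (AddCircle.liftIco T 0 f) n‖ ^ 2) ∧
      ∑' n : ℤ, ‖fourierCoeff (AddCircle.liftIco T 0 f) n‖ ^ 2
        = (1 / T) * ∫ x in (0:ℝ)..T, ‖f x‖ ^ 2 := by
  have h0 : f 0 = f (0 + T) := by rw [hper 0]
  set F : C(AddCircle T, ℂ) :=
    ⟨AddCircle.liftIco T 0 f, AddCircle.liftIco_continuous h0 hc.continuousOn⟩ with hF
  have hcoeff : ∀ n, fourierCoeff (AddCircle.liftIco T 0 f) n
      = fourierCoeff (toLp (E := ℂ) 2 haarAddCircle ℂ F : AddCircle T → ℂ) n :=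
    fun n => (fourierCoeff_toLp F n).symm
  -- summability
  have hsum : Summable fun n : ℤ =>
      ‖fourierCoeff (toLp (E := ℂ) 2 haarAddCircle ℂ F : AddCircle T → ℂ) n‖ ^ 2 := by
    have hm := lp.memℓp (fourierBasis.repr (toLp (E := ℂ) 2 haarAddCircle ℂ F))
    rw [memℓp_gen_iff (by norm_num : (0:ℝ) < (2 : ENNReal).toReal)] at hm
    have := hm
    simp only [ENNReal.toReal_ofNat] at this
    refine this.congr fun n => ?_
    rw [fourierBasis_repr]
    rw [← Real.rpow_natCast ‖fourierCoeff (↑(toLp (E := ℂ) 2 haarAddCircle ℂ F)) n‖ 2]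
    norm_num
  -- Parseval
  have hpars := tsum_sq_fourierCoeff (toLp (E := ℂ) 2 haarAddCircle ℂ F)
  -- rewrite RHS as interval integral of f
  have hint : ∫ t : AddCircle T, ‖(toLp (E := ℂ) 2 haarAddCircle ℂ F : AddCircle T → ℂ) t‖ ^ 2
        ∂haarAddCircle = (1 / T) * ∫ x in (0:ℝ)..T, ‖f x‖ ^ 2 := by
    have h1 : ∫ t : AddCircle T, ‖(toLp (E := ℂ) 2 haarAddCircle ℂ F : AddCircle T → ℂ) t‖ ^ 2
        ∂haarAddCircle = ∫ t : AddCircle T, ‖F t‖ ^ 2 ∂haarAddCircle := by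
      apply MeasureTheory.integral_congr_ae
      filter_upwards [ContinuousMap.coeFn_toLp (p := 2) haarAddCircle (𝕜 := ℂ) F] with t ht
      rw [ht]
    rw [h1]
    have h2 : ∫ t : AddCircle T, ‖F t‖ ^ 2 ∂(volume : Measure (AddCircle T))
        = T * ∫ t : AddCircle T, ‖F t‖ ^ 2 ∂haarAddCircle := by
      rw [volume_eq_smul_haarAddCircle, MeasureTheory.integral_smul_measure,
        ENNReal.toReal_ofReal hT.out.le, smul_eq_mul]
    have h3 : ∫ x in (0:ℝ)..(0 + T), ‖F (x : AddCircle T)‖ ^ 2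
        = ∫ t : AddCircle T, ‖F t‖ ^ 2 ∂(volume : Measure (AddCircle T)) :=
      AddCircle.intervalIntegral_preimage T 0 (fun t => ‖F t‖ ^ 2)
    have h4 : ∫ x in (0:ℝ)..(0 + T), ‖F (x : AddCircle T)‖ ^ 2
        = ∫ x in (0:ℝ)..T, ‖f x‖ ^ 2 := by
      rw [zero_add]
      rw [intervalIntegral.integral_of_le hT.out.le,
        intervalIntegral.integral_of_le hT.out.le]
      rw [MeasureTheory.integral_Ioc_eq_integral_Ioo,
        MeasureTheory.integral_Ioc_eq_integral_Ioo]
      refine setIntegral_congr_fun measurableSet_Ioo fun x hx => ?_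
      have : (F : AddCircle T → ℂ) (x : AddCircle T) = f x := by
        exact AddCircle.liftIco_coe_apply (by simpa using Ioo_subset_Ico_self hx)
      rw [this]
    rw [← h4, h3, h2]
    rw [← mul_assoc, one_div_mul_cancel hT.out.ne', one_mul]
  exact ⟨(hsum.congr fun n => by rw [hcoeff n]),
    by simp_rw [hcoeff]; rw [hpars, hint]⟩
end parseval

section wirt
variable {T : ℝ} [hT : Fact (0 < T)]

lemma coeff_deriv_rel {f f' : ℝ → ℂ} (hf : ∀ x, HasDerivAt f (f' x) x)
    (hf' : Continuous f') (hper : Function.Periodic f T) {n : ℤ} (hn : n ≠ 0) :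
    fourierCoeff (AddCircle.liftIco T 0 f) n
      = (T / (2 * Real.pi * Complex.I * n)) * fourierCoeff (AddCircle.liftIco T 0 f') n := by
  have hab : (0:ℝ) < 0 + T := by simpa using hT.out
  have key := fourierCoeffOn_of_hasDerivAt hab hn
    (fun x _ => hf x) ((hf'.intervalIntegrable 0 (0 + T)))
  have h1 := fourierCoeff_liftIco_eq (T := T) (a := 0) f n
  have h2 := fourierCoeff_liftIco_eq (T := T) (a := 0) f' n
  rw [h1, h2, key]
  have hfT : f (0 + T) - f 0 = 0 := by rw [hper 0, sub_self]
  rw [hfT, mul_zero, zero_sub]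
  have hπ : (Real.pi : ℂ) ≠ 0 := Complex.ofReal_ne_zero.mpr Real.pi_ne_zero
  have hnne : (n : ℂ) ≠ 0 := Int.cast_ne_zero.mpr hn
  push_cast
  field_simp
  ring
end wirt

section wirt2
variable {T : ℝ} [hT : Fact (0 < T)]

lemma periodic_deriv' {f f' : ℝ → ℂ} (hf : ∀ x, HasDerivAt f (f' x) x)
    (hper : Function.Periodic f T) : Function.Periodic f' T := by
  intro x
  have h1 : HasDerivAt (fun y => f (y + T)) (f' (x + T)) x :=
    HasDerivAt.comp_add_const x T (hf (x + T))
  have h2 : (fun y => f (y + T)) = f := funext fun y => hper y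
  rw [h2] at h1
  exact h1.unique (hf x)

lemma wirtinger_C {f f' : ℝ → ℂ} (hf : ∀ x, HasDerivAt f (f' x) x) (hf' : Continuous f')
    (hper : Function.Periodic f T) (hmean : (∫ x in (0:ℝ)..T, f x) = 0) :
    ∫ x in (0:ℝ)..T, ‖f x‖ ^ 2 ≤ (T / (2 * Real.pi)) ^ 2 * ∫ x in (0:ℝ)..T, ‖f' x‖ ^ 2 := by
  have hfc : Continuous f := by
    rw [continuous_iff_continuousAt]; exact fun x => (hf x).continuousAt
  have hper' : Function.Periodic f' T := periodic_deriv' hf hper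
  have hP := parseval_cont (T := T) f hfc hper
  have hP' := parseval_cont (T := T) f' hf' hper'
  -- zeroth coefficient vanishes
  have hc0 : fourierCoeff (AddCircle.liftIco T 0 f) 0 = 0 := by
    rw [fourierCoeff_liftIco_eq, fourierCoeffOn_eq_integral]
    simp only [neg_zero, fourier_zero, one_smul, zero_add]
    rw [hmean, smul_zero]
  set I1 := ∫ x in (0:ℝ)..T, ‖f x‖ ^ 2 with hI1
  set I2 := ∫ x in (0:ℝ)..T, ‖f' x‖ ^ 2 with hI2
  -- termwise bound
  have hterm : ∀ n : ℤ, ‖fourierCoeff (AddCircle.liftIco T 0 f) n‖ ^ 2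
      ≤ (T / (2 * Real.pi)) ^ 2 * ‖fourierCoeff (AddCircle.liftIco T 0 f') n‖ ^ 2 := by
    intro n
    rcases eq_or_ne n 0 with rfl | hn
    · rw [hc0]; simp; positivity
    · rw [coeff_deriv_rel hf hf' hper hn, norm_mul, mul_pow]
      have hn1 : (1:ℝ) ≤ |(n:ℝ)| := by
        rw [← Int.cast_abs]; exact_mod_cast Int.one_le_abs hn
      have hden : ‖(2 * (Real.pi:ℂ) * Complex.I * n : ℂ)‖ = 2 * Real.pi * |(n:ℝ)| := by
        simp [norm_mul, abs_of_pos Real.pi_pos]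
      have h1 : ‖((T:ℂ) / (2 * (Real.pi:ℂ) * Complex.I * n) : ℂ)‖ ≤ T / (2 * Real.pi) := by
        rw [norm_div, hden, Complex.norm_real, Real.norm_eq_abs, abs_of_pos hT.out]
        apply div_le_div_of_nonneg_left hT.out.le (by positivity)
        nlinarith [Real.pi_pos]
      have h2 : ‖((T:ℂ) / (2 * (Real.pi:ℂ) * Complex.I * n) : ℂ)‖ ^ 2 ≤ (T / (2 * Real.pi)) ^ 2 :=
        pow_le_pow_left₀ (norm_nonneg _) h1 2
      exact mul_le_mul_of_nonneg_right h2 (by positivity)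
  have htsum := hP.1.tsum_le_tsum hterm (hP'.1.mul_left ((T / (2 * Real.pi)) ^ 2))
  have h6 : (1/T) * I1 ≤ (T / (2 * Real.pi)) ^ 2 * ((1/T) * I2) := by
    rw [← hP.2, ← hP'.2, ← tsum_mul_left]; exact htsum
  have hTpos := hT.out
  have hπ := Real.pi_pos
  calc I1 = T * ((1/T) * I1) := by field_simp
  _ ≤ T * ((T / (2 * Real.pi)) ^ 2 * ((1/T) * I2)) := mul_le_mul_of_nonneg_left h6 hTpos.le
  _ = (T / (2 * Real.pi)) ^ 2 * I2 := by field_simp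
end wirt2

section vec
variable {V : Type*} [NormedAddCommGroup V] [InnerProductSpace ℝ V] [FiniteDimensional ℝ V]

lemma wirtinger_V {T : ℝ} (hT : 0 < T) {h h' : ℝ → V}
    (hder : ∀ x, HasDerivAt h (h' x) x) (hc' : Continuous h')
    (hper : Function.Periodic h T) (hmean : (∫ x in (0:ℝ)..T, h x) = 0) :
    ∫ x in (0:ℝ)..T, ‖h x‖ ^ 2 ≤ (T / (2 * Real.pi)) ^ 2 * ∫ x in (0:ℝ)..T, ‖h' x‖ ^ 2 := by
  haveI : Fact (0 < T) := ⟨hT⟩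
  have hhc : Continuous h := by
    rw [continuous_iff_continuousAt]; exact fun x => (hder x).continuousAt
  set b := stdOrthonormalBasis ℝ V with hb
  -- coordinate-wise Wirtinger
  have key : ∀ i, ∫ x in (0:ℝ)..T, (inner ℝ (b i) (h x) : ℝ) ^ 2
      ≤ (T / (2 * Real.pi)) ^ 2 * ∫ x in (0:ℝ)..T, (inner ℝ (b i) (h' x) : ℝ) ^ 2 := by
    intro i
    set f : ℝ → ℂ := fun x => ((inner ℝ (b i) (h x) : ℝ) : ℂ) with hf
    set f' : ℝ → ℂ := fun x => ((inner ℝ (b i) (h' x) : ℝ) : ℂ) with hf'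
    have hfd : ∀ x, HasDerivAt f (f' x) x := by
      intro x
      exact (((innerSL ℝ (b i)).hasFDerivAt.comp_hasDerivAt x (hder x))).ofReal_comp
    have hf'c : Continuous f' :=
      Complex.continuous_ofReal.comp ((innerSL ℝ (b i)).continuous.comp hc')
    have hfper : Function.Periodic f T := fun x => by simp [hf, hper x]
    have hfmean : (∫ x in (0:ℝ)..T, f x) = 0 := by
      show (∫ x in (0:ℝ)..T, ((inner ℝ (b i) (h x) : ℝ) : ℂ)) = 0
      rw [intervalIntegral.integral_ofReal]
      have h7 := (innerSL ℝ (b i)).intervalIntegral_comp_comm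
          ((hhc.intervalIntegrable 0 T) : IntervalIntegrable h MeasureTheory.volume 0 T)
      simp only [innerSL_apply_apply] at h7
      rw [h7, hmean, inner_zero_right, Complex.ofReal_zero]
    have W := wirtinger_C (T := T) hfd hf'c hfper hfmean
    have e1 : ∀ x, ‖f x‖ ^ 2 = (inner ℝ (b i) (h x) : ℝ) ^ 2 := by
      intro x; rw [hf, Complex.norm_real, Real.norm_eq_abs, sq_abs]
    have e2 : ∀ x, ‖f' x‖ ^ 2 = (inner ℝ (b i) (h' x) : ℝ) ^ 2 := by
      intro x; rw [hf', Complex.norm_real, Real.norm_eq_abs, sq_abs]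
    simpa only [e1, e2] using W
  -- sum over coordinates
  have hnorm : ∀ (v : V), ‖v‖ ^ 2 = ∑ i, (inner ℝ (b i) v : ℝ) ^ 2 := by
    intro v
    have := b.sum_inner_mul_inner v v
    rw [real_inner_self_eq_norm_sq] at this
    rw [← this]
    congr 1; ext i; rw [real_inner_comm v (b i)]; ring
  have hint1 : ∀ (u : ℝ → V), Continuous u →
      ∫ x in (0:ℝ)..T, ‖u x‖ ^ 2 = ∑ i, ∫ x in (0:ℝ)..T, (inner ℝ (b i) (u x) : ℝ) ^ 2 := by
    intro u hu
    rw [← intervalIntegral.integral_finset_sum]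
    · congr 1; ext x; rw [hnorm (u x)]
    · intro i _
      exact (((innerSL ℝ (b i)).continuous.comp hu).pow 2).intervalIntegrable 0 T
  rw [hint1 h hhc, hint1 h' hc', Finset.mul_sum]
  exact Finset.sum_le_sum fun i _ => key i
end vec

section core
variable {V : Type*} [NormedAddCommGroup V] [InnerProductSpace ℝ V] [FiniteDimensional ℝ V]

lemma core_arclength {g g' : ℝ → V} {L : ℝ} (hL : 0 < L)
    (hg : ∀ u, HasDerivAt g (g' u) u) (hg'c : Continuous g')
    (hper : Function.Periodic g L) (hunit : ∀ u, ‖g' u‖ = 1)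
    {c : V} (hc : (∫ u in (0:ℝ)..L, g u) = L • c) :
    ∫ u in (0:ℝ)..L, ‖g u - c‖ ≤ L ^ 2 / (2 * Real.pi) := by
  have hπ := Real.pi_pos
  have hgc : Continuous g := by
    rw [continuous_iff_continuousAt]; exact fun x => (hg x).continuousAt
  set h : ℝ → V := fun u => g u - c with hh
  have hhder : ∀ u, HasDerivAt h (g' u) u := fun u => (hg u).sub_const c
  have hhper : Function.Periodic h L := fun u => by simp [hh, hper u]
  have hhc : Continuous h := hgc.sub continuous_const
  have hhmean : (∫ u in (0:ℝ)..L, h u) = 0 := by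
    rw [hh]
    rw [intervalIntegral.integral_sub (hgc.intervalIntegrable 0 L)
      (intervalIntegrable_const)]
    rw [hc, intervalIntegral.integral_const, sub_zero, sub_eq_zero]
  have W := wirtinger_V hL hhder hg'c hhper hhmean
  have hInt2 : (∫ u in (0:ℝ)..L, ‖g' u‖ ^ 2) = L := by
    have : ∀ u, ‖g' u‖ ^ 2 = (1:ℝ) := fun u => by rw [hunit u]; norm_num
    simp_rw [this]
    rw [intervalIntegral.integral_const, smul_eq_mul, sub_zero, mul_one]
  rw [hInt2] at W
  -- pointwise AM-GM
  have hpt : ∀ u, ‖h u‖ ≤ (Real.pi / L) * ‖h u‖ ^ 2 + L / (4 * Real.pi) := by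
    intro u
    have h0 : (0:ℝ) ≤ ((2 * Real.pi / L) * ‖h u‖ - 1) ^ 2 := sq_nonneg _
    have hx := norm_nonneg (h u)
    have hLne : L ≠ 0 := hL.ne'
    have hπne : Real.pi ≠ 0 := hπ.ne'
    have key : (Real.pi / L) * ‖h u‖ ^ 2 + L / (4 * Real.pi) - ‖h u‖
        = (L / (4 * Real.pi)) * ((2 * Real.pi / L) * ‖h u‖ - 1) ^ 2 := by
      field_simp
      ring
    nlinarith [mul_nonneg (le_of_lt (div_pos hL (by positivity : (0:ℝ) < 4 * Real.pi))) h0]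
  have hmono : ∫ u in (0:ℝ)..L, ‖h u‖
      ≤ ∫ u in (0:ℝ)..L, ((Real.pi / L) * ‖h u‖ ^ 2 + L / (4 * Real.pi)) := by
    apply intervalIntegral.integral_mono_on hL.le
    · exact hhc.norm.intervalIntegrable 0 L
    · exact ((continuous_const.mul (hhc.norm.pow 2)).add continuous_const).intervalIntegrable 0 L
    · exact fun u _ => hpt u
  have hsplit : ∫ u in (0:ℝ)..L, ((Real.pi / L) * ‖h u‖ ^ 2 + L / (4 * Real.pi))
      = (Real.pi / L) * (∫ u in (0:ℝ)..L, ‖h u‖ ^ 2) + L * (L / (4 * Real.pi)) := by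
    rw [intervalIntegral.integral_add (f := fun u => Real.pi / L * ‖h u‖ ^ 2)
      (g := fun _ => L / (4 * Real.pi)) ((continuous_const.mul (hhc.norm.pow 2)).intervalIntegrable 0 L)
      intervalIntegrable_const]
    rw [intervalIntegral.integral_const_mul, intervalIntegral.integral_const, smul_eq_mul,
      sub_zero]
  have hfinal : (Real.pi / L) * ((L / (2 * Real.pi)) ^ 2 * L) + L * (L / (4 * Real.pi))
      = L ^ 2 / (2 * Real.pi) := by
    field_simp
    ring
  calc ∫ u in (0:ℝ)..L, ‖g u - c‖ = ∫ u in (0:ℝ)..L, ‖h u‖ := rfl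
  _ ≤ (Real.pi / L) * (∫ u in (0:ℝ)..L, ‖h u‖ ^ 2) + L * (L / (4 * Real.pi)) := by
      rw [← hsplit]; exact hmono
  _ ≤ (Real.pi / L) * ((L / (2 * Real.pi)) ^ 2 * L) + L * (L / (4 * Real.pi)) := by
      have := mul_le_mul_of_nonneg_left W (le_of_lt (div_pos hπ hL))
      linarith
  _ = L ^ 2 / (2 * Real.pi) := hfinal
end core

section finalpart
variable {V : Type*} [NormedAddCommGroup V] [InnerProductSpace ℝ V] [FiniteDimensional ℝ V]

lemma periodic_derivE {E : Type*} [NormedAddCommGroup E] [NormedSpace ℝ E]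
    {f : ℝ → E} {T : ℝ} (hf : Differentiable ℝ f) (hper : Function.Periodic f T) :
    Function.Periodic (deriv f) T := by
  intro x
  have h1 : HasDerivAt (fun y => f (y + T)) (deriv f (x + T)) x :=
    HasDerivAt.comp_add_const x T (hf (x + T)).hasDerivAt
  have h2 : (fun y => f (y + T)) = f := funext fun y => hper y
  rw [h2] at h1
  exact h1.deriv.symm

theorem stmt_3' {V : Type*} [NormedAddCommGroup V] [InnerProductSpace ℝ V]
    [FiniteDimensional ℝ V]
    (γ : ℝ → V) (hper : ∀ θ : ℝ, γ (θ + 2 * Real.pi) = γ θ)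
    (hγ : ContDiff ℝ 1 γ) (himm : ∀ θ : ℝ, deriv γ θ ≠ 0)
    (Len : ℝ) (hLen : Len = ∫ θ in (0:ℝ)..(2 * Real.pi), ‖deriv γ θ‖)
    (c : V) (hc : c = Len⁻¹ • ∫ θ in (0:ℝ)..(2 * Real.pi), ‖deriv γ θ‖ • γ θ)
    (K : ℝ)
    (hK : K = ∫ t in (0:ℝ)..1, ∫ θ in (0:ℝ)..(2 * Real.pi),
      t * Real.sqrt (‖γ θ - c‖ ^ 2 * ‖deriv γ θ‖ ^ 2
        - (inner ℝ (γ θ - c) (deriv γ θ) : ℝ) ^ 2)) :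
    4 * Real.pi * K ≤ Len ^ 2 := by
  have hπ := Real.pi_pos
  have h2π := Real.two_pi_pos
  set ρ : ℝ → ℝ := fun θ => ‖deriv γ θ‖ with hρ
  have hγdiff : Differentiable ℝ γ := hγ.differentiable one_ne_zero
  have hγc : Continuous γ := hγdiff.continuous
  have hγ'c : Continuous (deriv γ) := hγ.continuous_deriv le_rfl
  have hγd : ∀ θ, HasDerivAt γ (deriv γ θ) θ := fun θ => (hγdiff θ).hasDerivAt
  have hρc : Continuous ρ := hγ'c.norm
  have hρpos : ∀ θ, 0 < ρ θ := fun θ => norm_pos_iff.mpr (himm θ)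
  have hperγ : Function.Periodic γ (2 * Real.pi) := hper
  have hperγ' : Function.Periodic (deriv γ) (2 * Real.pi) := periodic_derivE hγdiff hperγ
  have hperρ : Function.Periodic ρ (2 * Real.pi) := fun x => by rw [hρ]; simp [hperγ' x]
  have hLpos : 0 < Len := by
    rw [hLen]
    exact intervalIntegral.intervalIntegral_pos_of_pos
      (hρc.intervalIntegrable 0 (2 * Real.pi)) hρpos h2π
  -- arclength function
  set s : ℝ → ℝ := fun θ => ∫ u in (0:ℝ)..θ, ρ u with hs
  have hsd : ∀ θ, HasDerivAt s (ρ θ) θ := fun θ =>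
    intervalIntegral.integral_hasDerivAt_right (hρc.intervalIntegrable 0 θ)
      (hρc.stronglyMeasurable.stronglyMeasurableAtFilter) hρc.continuousAt
  have hsmono : StrictMono s :=
    strictMono_of_deriv_pos (fun θ => by rw [(hsd θ).deriv]; exact hρpos θ)
  have hscont : Continuous s := by
    rw [continuous_iff_continuousAt]; exact fun x => (hsd x).continuousAt
  have hs0 : s 0 = 0 := intervalIntegral.integral_same
  have hsadd : ∀ θ, s (θ + 2 * Real.pi) = s θ + Len := by
    intro θ
    have hsplit : s θ + ∫ u in θ..(θ + 2 * Real.pi), ρ u = s (θ + 2 * Real.pi) :=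
      intervalIntegral.integral_add_adjacent_intervals (hρc.intervalIntegrable 0 θ)
        (hρc.intervalIntegrable θ (θ + 2 * Real.pi))
    have hpi : (∫ u in θ..(θ + 2 * Real.pi), ρ u) = ∫ u in (0:ℝ)..(0 + 2 * Real.pi), ρ u :=
      hperρ.intervalIntegral_add_eq θ 0
    rw [hpi] at hsplit
    rw [← hsplit, hLen, zero_add]
  have hssub : ∀ θ, s (θ - 2 * Real.pi) = s θ - Len := by
    intro θ
    have := hsadd (θ - 2 * Real.pi)
    simp only [sub_add_cancel] at this
    linarith
  -- surjectivity
  have hval : ∀ n : ℕ, s (2 * Real.pi * n) = n * Len := by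
    intro n
    induction n with
    | zero => simpa using hs0
    | succ n ih =>
      have : (2 * Real.pi * (n + 1) : ℝ) = 2 * Real.pi * n + 2 * Real.pi := by push_cast; ring
      rw [Nat.cast_succ, this, hsadd, ih]; ring
  have hvalneg : ∀ n : ℕ, s (-(2 * Real.pi * n)) = -(n * Len) := by
    intro n
    induction n with
    | zero => simpa using hs0
    | succ n ih =>
      have : (-(2 * Real.pi * (n + 1)) : ℝ) = -(2 * Real.pi * n) - 2 * Real.pi := by
        push_cast; ring
      rw [Nat.cast_succ, this, hssub, ih]; ring
  have hssurj : Function.Surjective s := by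
    intro y
    obtain ⟨n, hn⟩ := exists_nat_ge (|y| / Len)
    have hyn : |y| ≤ n * Len := by
      rw [div_le_iff₀ hLpos] at hn; linarith
    have habs := abs_le.mp hyn
    have h1 : s (-(2 * Real.pi * n)) ≤ y := by rw [hvalneg n]; linarith [habs.1]
    have h2 : y ≤ s (2 * Real.pi * n) := by rw [hval n]; linarith [habs.2]
    have hle : (-(2 * Real.pi * n) : ℝ) ≤ 2 * Real.pi * n := by 
      have h0 : (0:ℝ) ≤ 2 * Real.pi * n := by positivity
      linarith
    obtain ⟨x, _, hx⟩ := intermediate_value_Icc hle hscont.continuousOn ⟨h1, h2⟩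
    exact ⟨x, hx⟩
  -- inverse function
  set e := StrictMono.orderIsoOfSurjective s hsmono hssurj with he
  set ψ : ℝ → ℝ := fun y => e.symm y with hψ
  have hψc : Continuous ψ := e.symm.continuous
  have hsψ : ∀ y, s (ψ y) = y := by
    intro y
    have : e (e.symm y) = y := e.apply_symm_apply y
    rwa [← StrictMono.coe_orderIsoOfSurjective s hsmono hssurj]
  have hψs : ∀ θ, ψ (s θ) = θ := fun θ =>
    StrictMono.orderIsoOfSurjective_symm_apply_self s hsmono hssurj θ
  have hψd : ∀ y, HasDerivAt ψ ((ρ (ψ y))⁻¹) y := by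
    intro y
    exact HasDerivAt.of_local_left_inverse (hψc.continuousAt)
      (hsd (ψ y)) (hρpos (ψ y)).ne' (Filter.Eventually.of_forall hsψ)
  have hψadd : ∀ y, ψ (y + Len) = ψ y + 2 * Real.pi := by
    intro y
    apply hsmono.injective
    rw [hsψ, hsadd, hsψ]
  -- reparametrized curve
  set g : ℝ → V := fun u => γ (ψ u) with hg
  set g' : ℝ → V := fun u => (ρ (ψ u))⁻¹ • deriv γ (ψ u) with hg'
  have hgd : ∀ u, HasDerivAt g (g' u) u := fun u =>
    HasDerivAt.scomp u (hγd (ψ u)) (hψd u)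
  have hg'c : Continuous g' := by
    apply Continuous.smul
    · exact ((hρc.comp hψc).inv₀ (fun u => (hρpos (ψ u)).ne'))
    · exact hγ'c.comp hψc
  have hunit : ∀ u, ‖g' u‖ = 1 := by
    intro u
    rw [hg']
    simp only [norm_smul, norm_inv, Real.norm_eq_abs, abs_of_pos (hρpos (ψ u))]
    exact inv_mul_cancel₀ (hρpos (ψ u)).ne'
  have hgper : Function.Periodic g Len := by
    intro u
    rw [hg]
    simp only [hψadd u, hperγ (ψ u)]
  -- change of variables
  have hs2π : s (2 * Real.pi) = Len := by
    have := hsadd 0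
    rw [hs0, zero_add, zero_add] at this
    exact this
  have hCOV : ∀ (G : ℝ → V), Continuous G →
      (∫ θ in (0:ℝ)..(2 * Real.pi), ρ θ • G (s θ)) = ∫ u in (0:ℝ)..Len, G u := by
    intro G hG
    have := intervalIntegral.integral_comp_smul_deriv
      (f := s) (f' := ρ) (g := G) (a := 0) (b := 2 * Real.pi)
      (fun x _ => hsd x) hρc.continuousOn hG
    rw [hs0, hs2π] at this
    simpa using this
  have hCOVR : ∀ (G : ℝ → ℝ), Continuous G →
      (∫ θ in (0:ℝ)..(2 * Real.pi), ρ θ • G (s θ)) = ∫ u in (0:ℝ)..Len, G u := by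
    intro G hG
    have := intervalIntegral.integral_comp_smul_deriv
      (f := s) (f' := ρ) (g := G) (a := 0) (b := 2 * Real.pi)
      (fun x _ => hsd x) hρc.continuousOn hG
    rw [hs0, hs2π] at this
    simpa using this
  have hcen : (∫ u in (0:ℝ)..Len, g u) = Len • c := by
    have h1 := hCOV g (hγc.comp hψc)
    have h2 : (∫ θ in (0:ℝ)..(2 * Real.pi), ρ θ • g (s θ))
        = ∫ θ in (0:ℝ)..(2 * Real.pi), ρ θ • γ θ := by
      apply intervalIntegral.integral_congr
      intro θ _
      rw [hg]
      simp [hψs θ]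
    rw [h2] at h1
    rw [← h1, hc, smul_inv_smul₀ hLpos.ne']
  have hJcov : (∫ θ in (0:ℝ)..(2 * Real.pi), ρ θ * ‖γ θ - c‖)
      = ∫ u in (0:ℝ)..Len, ‖g u - c‖ := by
    have hGc : Continuous (fun u => ‖γ (ψ u) - c‖ • (1:ℝ)) := by
      simp only [smul_eq_mul, mul_one]
      exact ((hγc.comp hψc).sub continuous_const).norm
    have h1 := hCOVR (fun u => ‖g u - c‖) (((hγc.comp hψc).sub continuous_const).norm)
    rw [← h1]
    apply intervalIntegral.integral_congr
    intro θ _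
    rw [hg]
    simp [hψs θ, smul_eq_mul]
  -- core inequality
  have hJ : (∫ u in (0:ℝ)..Len, ‖g u - c‖) ≤ Len ^ 2 / (2 * Real.pi) :=
    core_arclength hLpos hgd hg'c hgper hunit hcen
  -- outer estimate
  set W : ℝ → ℝ := fun θ => Real.sqrt (‖γ θ - c‖ ^ 2 * ‖deriv γ θ‖ ^ 2
      - (inner ℝ (γ θ - c) (deriv γ θ) : ℝ) ^ 2) with hW
  have hWle : ∀ θ, W θ ≤ ρ θ * ‖γ θ - c‖ := by
    intro θ
    rw [hW]
    have h1 : ‖γ θ - c‖ ^ 2 * ‖deriv γ θ‖ ^ 2 - (inner ℝ (γ θ - c) (deriv γ θ) : ℝ) ^ 2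
        ≤ (ρ θ * ‖γ θ - c‖) ^ 2 := by
      have := sq_nonneg (inner ℝ (γ θ - c) (deriv γ θ) : ℝ)
      rw [hρ]; nlinarith
    calc Real.sqrt (‖γ θ - c‖ ^ 2 * ‖deriv γ θ‖ ^ 2
        - (inner ℝ (γ θ - c) (deriv γ θ) : ℝ) ^ 2) ≤ Real.sqrt ((ρ θ * ‖γ θ - c‖) ^ 2) :=
          Real.sqrt_le_sqrt h1
    _ = ρ θ * ‖γ θ - c‖ := Real.sqrt_sq (by positivity)
  have hWc : Continuous W := by
    rw [hW]
    apply Real.continuous_sqrt.comp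
    apply Continuous.sub
    · exact (((hγc.sub continuous_const).norm.pow 2).mul (hγ'c.norm.pow 2))
    · exact (((hγc.sub continuous_const).inner hγ'c).pow 2)
  have hIJ : (∫ θ in (0:ℝ)..(2 * Real.pi), W θ)
      ≤ ∫ θ in (0:ℝ)..(2 * Real.pi), ρ θ * ‖γ θ - c‖ := by
    apply intervalIntegral.integral_mono_on h2π.le
    · exact hWc.intervalIntegrable 0 (2 * Real.pi)
    · exact (hρc.mul (hγc.sub continuous_const).norm).intervalIntegrable 0 (2 * Real.pi)
    · exact fun θ _ => hWle θ
  -- compute K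
  have hK2 : K = ((1:ℝ) ^ 2 - 0 ^ 2) / 2 * ∫ θ in (0:ℝ)..(2 * Real.pi), W θ := by
    rw [hK]
    simp_rw [intervalIntegral.integral_const_mul]
    rw [intervalIntegral.integral_mul_const, integral_id]
  have hfin : (∫ θ in (0:ℝ)..(2 * Real.pi), W θ) ≤ Len ^ 2 / (2 * Real.pi) := by
    calc (∫ θ in (0:ℝ)..(2 * Real.pi), W θ)
        ≤ ∫ θ in (0:ℝ)..(2 * Real.pi), ρ θ * ‖γ θ - c‖ := hIJ
    _ = ∫ u in (0:ℝ)..Len, ‖g u - c‖ := hJcov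
    _ ≤ Len ^ 2 / (2 * Real.pi) := hJ
  rw [hK2]
  calc 4 * Real.pi * (((1:ℝ) ^ 2 - 0 ^ 2) / 2 * ∫ θ in (0:ℝ)..(2 * Real.pi), W θ)
      = 2 * Real.pi * (∫ θ in (0:ℝ)..(2 * Real.pi), W θ) := by ring
  _ ≤ 2 * Real.pi * (Len ^ 2 / (2 * Real.pi)) := by
      exact mul_le_mul_of_nonneg_left hfin (by positivity)
  _ = Len ^ 2 := by field_simp
end finalpart

/-- isoperimetric inequality for the cone over a closed `C¹`
immersed curve `γ` in a finite-dimensional inner product space `V`, with vertex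
at the center of mass `c`: `|Γ|² ≥ 4π |K(Γ)|`.  The cone is parametrized by
`ξ(t,θ) = c + t(γ(θ) - c)` and its area is
`∫₀¹∫₀^{2π} ‖∂_t ξ ∧ ∂_θ ξ‖ dθ dt`, where
`‖a ∧ b‖ = √(‖a‖²‖b‖² - ⟪a,b⟫²)`. -/
theorem stmt_3 {V : Type*} [NormedAddCommGroup V] [InnerProductSpace ℝ V]
    [FiniteDimensional ℝ V]
    (γ : ℝ → V) (hper : ∀ θ : ℝ, γ (θ + 2 * Real.pi) = γ θ)
    (hγ : ContDiff ℝ 1 γ) (himm : ∀ θ : ℝ, deriv γ θ ≠ 0)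
    (Len : ℝ) (hLen : Len = ∫ θ in (0:ℝ)..(2 * Real.pi), ‖deriv γ θ‖)
    (c : V) (hc : c = Len⁻¹ • ∫ θ in (0:ℝ)..(2 * Real.pi), ‖deriv γ θ‖ • γ θ)
    (K : ℝ)
    (hK : K = ∫ t in (0:ℝ)..1, ∫ θ in (0:ℝ)..(2 * Real.pi),
      t * Real.sqrt (‖γ θ - c‖ ^ 2 * ‖deriv γ θ‖ ^ 2
        - (inner ℝ (γ θ - c) (deriv γ θ) : ℝ) ^ 2)) :
    4 * Real.pi * K ≤ Len ^ 2 := by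
  exact stmt_3' γ hper hγ himm Len hLen c hc K hK
end

section
/- Let f : Ď⁺ → M be a C¹ map into a Riemannian manifold with energy E = ∫_{Ď⁺} ‖df‖² < ∞ (computed with the Euclidean metric on Ď⁺). For every r ∈ (0,1) there exists t₀ ∈ [r², r] such that the length of the image of the half circle Γ_{t₀} = {z ∈ Ď⁺ : |z| = t₀} satisfies L(t₀)² ≤ π E / log(1/r), where L(t) = ∫_{Γ_t} ‖df‖. -/
open MeasureTheory Set Real

lemma cs {h : ℝ → ℝ} (hc : Continuous h) :
    (∫ θ in (0:ℝ)..Real.pi, h θ)^2 ≤ Real.pi * ∫ θ in (0:ℝ)..Real.pi, (h θ)^2 := by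
  set I := ∫ θ in (0:ℝ)..Real.pi, h θ with hI
  set J := ∫ θ in (0:ℝ)..Real.pi, (h θ)^2 with hJ
  have hpi : (0:ℝ) < Real.pi := Real.pi_pos
  have h1 : IntervalIntegrable h volume 0 Real.pi := hc.intervalIntegrable _ _
  have h2 : IntervalIntegrable (fun θ => (h θ)^2) volume 0 Real.pi :=
    (hc.pow 2).intervalIntegrable _ _
  have key : 0 ≤ ∫ θ in (0:ℝ)..Real.pi, (h θ - I/Real.pi)^2 :=
    intervalIntegral.integral_nonneg hpi.le (fun x _ => sq_nonneg _)
  have expand : ∫ θ in (0:ℝ)..Real.pi, (h θ - I/Real.pi)^2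
      = J - (2*(I/Real.pi))*I + (I/Real.pi)^2*Real.pi := by
    have e : ∀ θ, (h θ - I/Real.pi)^2 = ((h θ)^2 - (2*(I/Real.pi))*h θ) + (I/Real.pi)^2 :=
      fun θ => by ring
    simp_rw [e]
    rw [intervalIntegral.integral_add (h2.sub (h1.const_mul _)) intervalIntegrable_const,
        intervalIntegral.integral_sub h2 (h1.const_mul _),
        intervalIntegral.integral_const_mul, intervalIntegral.integral_const]
    simp
    ring
  rw [expand] at key
  have h3 : 0 ≤ J - I^2/Real.pi := by
    have : J - (2*(I/Real.pi))*I + (I/Real.pi)^2*Real.pi = J - I^2/Real.pi := by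
      field_simp; ring
    linarith [this ▸ key]
  have h4 : I^2/Real.pi ≤ J := by linarith
  have := (div_le_iff₀ hpi).mp h4
  linarith [this, mul_comm J Real.pi]

lemma polar_key (ρ : ℂ → ℝ) (hρ0 : ∀ z, 0 ≤ ρ z)
    (hρ : ContinuousOn ρ {z : ℂ | ‖z‖ < 1 ∧ 0 ≤ z.im ∧ z ≠ 0})
    (hint : IntegrableOn ρ {z : ℂ | ‖z‖ < 1 ∧ 0 ≤ z.im ∧ z ≠ 0})
    (a b : ℝ) (ha : 0 < a) (hab : a < b) (hb : b < 1) :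
    ∫ t in Set.Ioo a b, (∫ θ in Set.Ioo 0 π, t * ρ ((t:ℂ) * Complex.exp ((θ:ℂ) * Complex.I)))
      ≤ ∫ z in {z : ℂ | ‖z‖ < 1 ∧ 0 ≤ z.im ∧ z ≠ 0}, ρ z := by
  set S : Set ℂ := {z : ℂ | ‖z‖ < 1 ∧ 0 ≤ z.im ∧ z ≠ 0} with hS
  set A : Set ℂ := {z : ℂ | 0 < z.im} ∩ (norm : ℂ → ℝ) ⁻¹' (Set.Ioo a b) with hA
  set B : Set (ℝ × ℝ) := Set.Ioo a b ×ˢ Set.Ioo 0 π with hB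
  set g : ℝ × ℝ → ℝ := fun p => p.1 * ρ ((p.1:ℂ) * Complex.exp ((p.2:ℂ) * Complex.I)) with hg
  have hAopen : IsOpen A :=
    (isOpen_lt continuous_const Complex.continuous_im).inter (isOpen_Ioo.preimage continuous_norm)
  have hAS : A ⊆ S := by
    rintro z ⟨him, habs⟩
    exact ⟨habs.2.trans hb, le_of_lt him, fun h => by simp [h] at him⟩
  have hBmeas : MeasurableSet B := measurableSet_Ioo.prod measurableSet_Ioo
  have hBsub : B ⊆ Complex.polarCoord.target := by
    rintro ⟨t, θ⟩ ⟨ht, hθ⟩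
    rw [Complex.polarCoord_target]
    exact ⟨lt_trans ha ht.1, lt_trans (neg_neg_iff_pos.mpr pi_pos) hθ.1, hθ.2⟩
  -- the symm formula
  have hsymm : ∀ p : ℝ × ℝ, Complex.polarCoord.symm p = (p.1:ℂ) * Complex.exp ((p.2:ℂ) * Complex.I) := by
    intro p
    rw [Complex.polarCoord_symm_apply, Complex.exp_mul_I]
    push_cast
    ring
  have him : ∀ p : ℝ × ℝ, (Complex.polarCoord.symm p).im = p.1 * Real.sin p.2 := by
    intro p
    rw [Complex.polarCoord_symm_apply]
    simp [← Complex.ofReal_sin, ← Complex.ofReal_cos]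
  -- membership characterization
  have hmem : ∀ p ∈ Complex.polarCoord.target, (Complex.polarCoord.symm p ∈ A ↔ p ∈ B) := by
    rintro ⟨t, θ⟩ hp
    rw [Complex.polarCoord_target] at hp
    obtain ⟨ht, hθ⟩ := hp
    simp only [hA, hB, Set.mem_inter_iff, Set.mem_setOf_eq, Set.mem_preimage,
      Set.mem_prod, Set.mem_Ioo] at *
    rw [him, Complex.norm_polarCoord_symm, abs_of_pos (lt_of_le_of_lt (le_refl 0) ht)]
    constructor
    · rintro ⟨h1, h2⟩
      refine ⟨h2, ?_, hθ.2⟩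
      by_contra hc
      push_neg at hc
      have : Real.sin θ ≤ 0 := Real.sin_nonpos_of_nonpos_of_neg_pi_le hc hθ.1.le
      nlinarith [ht]
    · rintro ⟨h1, h2⟩
      exact ⟨mul_pos (show (0:ℝ) < t from ht) (Real.sin_pos_of_pos_of_lt_pi h2.1 h2.2), h1⟩
  -- step 2: polar change of variables
  have step2 : ∫ z in A, ρ z = ∫ p in B, g p := by
    calc ∫ z in A, ρ z = ∫ z, Set.indicator A ρ z := (integral_indicator hAopen.measurableSet).symm
      _ = ∫ p in Complex.polarCoord.target, p.1 • Set.indicator A ρ (Complex.polarCoord.symm p) :=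
          (Complex.integral_comp_polarCoord_symm _).symm
      _ = ∫ p in Complex.polarCoord.target, Set.indicator B g p := by
          apply setIntegral_congr_fun Complex.polarCoord.open_target.measurableSet
          intro p hp
          show p.1 • Set.indicator A ρ (Complex.polarCoord.symm p) = Set.indicator B g p
          by_cases hpB : p ∈ B
          · rw [Set.indicator_of_mem hpB, Set.indicator_of_mem ((hmem p hp).mpr hpB),
              smul_eq_mul, hsymm]
          · rw [Set.indicator_of_notMem hpB,
              Set.indicator_of_notMem (fun hc => hpB ((hmem p hp).mp hc)), smul_zero]
      _ = ∫ p in Complex.polarCoord.target ∩ B, g p := setIntegral_indicator hBmeas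
      _ = ∫ p in B, g p := by rw [Set.inter_eq_right.mpr hBsub]
  -- step 1
  have step1 : ∫ z in A, ρ z ≤ ∫ z in S, ρ z := by
    apply setIntegral_mono_set hint
    · exact Filter.Eventually.of_forall fun z => hρ0 z
    · exact HasSubset.Subset.eventuallyLE hAS
  -- integrability of g on B
  have hgint : IntegrableOn g B := by
    have hcont : ContinuousOn g (Set.Icc a b ×ˢ Set.Icc 0 π) := by
      have hψ : Continuous (fun p : ℝ × ℝ => (p.1:ℂ) * Complex.exp ((p.2:ℂ) * Complex.I)) :=
        (Complex.continuous_ofReal.comp continuous_fst).mul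
          (Complex.continuous_exp.comp
            ((Complex.continuous_ofReal.comp continuous_snd).mul continuous_const))
      have hmaps : Set.MapsTo (fun p : ℝ × ℝ => (p.1:ℂ) * Complex.exp ((p.2:ℂ) * Complex.I))
          (Set.Icc a b ×ˢ Set.Icc 0 π) S := by
        rintro ⟨t, θ⟩ ⟨ht, hθ⟩
        have ht0 : (0:ℝ) < t := lt_of_lt_of_le ha ht.1
        have habs : ‖((t:ℂ) * Complex.exp ((θ:ℝ) * Complex.I))‖ = t := by
          rw [norm_mul, Complex.norm_exp_ofReal_mul_I, Complex.norm_real, Real.norm_eq_abs, abs_of_pos ht0, mul_one]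
        refine ⟨by rw [habs]; exact lt_of_le_of_lt ht.2 hb, ?_, ?_⟩
        · have : ((t:ℂ) * Complex.exp ((θ:ℝ) * Complex.I)).im = t * Real.sin θ := by
            rw [Complex.exp_mul_I]; push_cast; simp [← Complex.ofReal_sin, ← Complex.ofReal_cos]
          rw [this]
          exact mul_nonneg ht0.le (Real.sin_nonneg_of_nonneg_of_le_pi hθ.1 hθ.2)
        · intro hc
          simp only at hc
          rw [hc] at habs; simp at habs; exact ht0.ne' habs.symm
      exact continuousOn_fst.mul (hρ.comp (Continuous.continuousOn hψ) hmaps)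
    exact (hcont.integrableOn_compact (isCompact_Icc.prod isCompact_Icc)).mono_set
      (Set.prod_mono Set.Ioo_subset_Icc_self Set.Ioo_subset_Icc_self)
  -- Fubini
  have step3 : ∫ p in B, g p
      = ∫ t in Set.Ioo a b, ∫ θ in Set.Ioo 0 π, g (t, θ) := by
    rw [hB, Measure.volume_eq_prod, ← Measure.prod_restrict]
    apply integral_prod
    rw [Measure.prod_restrict, ← Measure.volume_eq_prod]
    exact hgint
  calc ∫ t in Set.Ioo a b, (∫ θ in Set.Ioo 0 π, t * ρ ((t:ℂ) * Complex.exp ((θ:ℂ) * Complex.I)))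
      = ∫ p in B, g p := step3.symm
    _ = ∫ z in A, ρ z := step2.symm
    _ ≤ ∫ z in S, ρ z := step1

set_option maxHeartbeats 2000000 in
/-- Courant–Lebesgue lemma: for a `C¹` map `f` on the punctured
upper half unit disk `Ď⁺` (with derivative `Φ`, continuous on `Ď⁺`) with finite
energy `E = ∫_{Ď⁺} ‖df‖²`, for every `r ∈ (0,1)` there exists `t₀ ∈ [r², r]`
such that the length `L(t₀) = ∫_{Γ_{t₀}} ‖df‖` of the image of the half circle
`Γ_{t₀}` satisfies `L(t₀)² ≤ π E / log(1/r)`. -/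
theorem stmt_4 {E : Type*} [NormedAddCommGroup E] [NormedSpace ℝ E]
    (f : ℂ → E) (Φ : ℂ → (ℂ →L[ℝ] E))
    (hΦcont : ContinuousOn Φ {z : ℂ | ‖z‖ < 1 ∧ 0 ≤ z.im ∧ z ≠ 0})
    (hdiff : ∀ z ∈ {z : ℂ | ‖z‖ < 1 ∧ 0 ≤ z.im ∧ z ≠ 0},
      HasFDerivWithinAt f (Φ z) {z : ℂ | ‖z‖ < 1 ∧ 0 ≤ z.im ∧ z ≠ 0} z)
    (Energy : ℝ)
    (hE : Energy = ∫ z in {z : ℂ | ‖z‖ < 1 ∧ 0 ≤ z.im ∧ z ≠ 0}, ‖Φ z‖ ^ 2)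
    (hint : IntegrableOn (fun z => ‖Φ z‖ ^ 2)
      {z : ℂ | ‖z‖ < 1 ∧ 0 ≤ z.im ∧ z ≠ 0})
    (L : ℝ → ℝ)
    (hL : ∀ t : ℝ, L t = ∫ θ in (0:ℝ)..Real.pi,
      ‖Φ ((t : ℂ) * Complex.exp ((θ : ℂ) * Complex.I))‖ * t) :
    ∀ r ∈ Set.Ioo (0:ℝ) 1, ∃ t₀ ∈ Set.Icc (r ^ 2) r,
      (L t₀) ^ 2 ≤ Real.pi * Energy / Real.log (1 / r) := by
  intro r hr
  obtain ⟨hr0, hr1⟩ := hr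
  set S : Set ℂ := {z : ℂ | ‖z‖ < 1 ∧ 0 ≤ z.im ∧ z ≠ 0} with hSdef
  set a : ℝ := r^2 with hadef
  set b : ℝ := r with hbdef
  have ha : 0 < a := pow_pos hr0 2
  have hab : a < b := by nlinarith
  have hb0 : 0 < b := hr0
  have hlog : 0 < Real.log (1/r) := Real.log_pos (one_lt_one_div hr0 hr1)
  set c : ℝ := Real.pi * Energy / Real.log (1/r) with hcdef
  by_contra hcon
  push_neg at hcon
  -- clamped functions
  set τ : ℝ → ℝ := fun t => max a (min t b) with hτdef
  set σ : ℝ → ℝ := fun θ => max 0 (min θ Real.pi) with hσdef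
  have hτmem : ∀ t, τ t ∈ Set.Icc a b := fun t =>
    ⟨le_max_left _ _, max_le hab.le (min_le_right _ _)⟩
  have hσmem : ∀ θ, σ θ ∈ Set.Icc 0 Real.pi := fun θ =>
    ⟨le_max_left _ _, max_le Real.pi_pos.le (min_le_right _ _)⟩
  have hτeq : ∀ t ∈ Set.Icc a b, τ t = t := fun t ht => by
    simp only [hτdef]; rw [min_eq_left ht.2, max_eq_right ht.1]
  have hσeq : ∀ θ ∈ Set.Icc (0:ℝ) Real.pi, σ θ = θ := fun θ hθ => by
    simp only [hσdef]; rw [min_eq_left hθ.2, max_eq_right hθ.1]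
  set F : ℝ → ℝ → ℝ :=
    fun t θ => ‖Φ ((τ t : ℂ) * Complex.exp ((σ θ : ℂ) * Complex.I))‖ with hFdef
  -- continuity of F
  have hτcont : Continuous τ := continuous_const.max (continuous_id.min continuous_const)
  have hσcont : Continuous σ := continuous_const.max (continuous_id.min continuous_const)
  have hψcont : Continuous
      (fun p : ℝ × ℝ => ((τ p.1 : ℝ) : ℂ) * Complex.exp (((σ p.2 : ℝ) : ℂ) * Complex.I)) :=
    (Complex.continuous_ofReal.comp (hτcont.comp continuous_fst)).mul
      (Complex.continuous_exp.comp
        ((Complex.continuous_ofReal.comp (hσcont.comp continuous_snd)).mul continuous_const))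
  have hψmaps : ∀ p : ℝ × ℝ,
      ((τ p.1 : ℝ) : ℂ) * Complex.exp (((σ p.2 : ℝ) : ℂ) * Complex.I) ∈ S := by
    intro p
    obtain ⟨ht1, ht2⟩ := hτmem p.1
    obtain ⟨hs1, hs2⟩ := hσmem p.2
    have ht0 : 0 < τ p.1 := lt_of_lt_of_le ha ht1
    have habs : ‖(((τ p.1 : ℝ) : ℂ) * Complex.exp (((σ p.2 : ℝ) : ℂ) * Complex.I))‖
        = τ p.1 := by
      rw [norm_mul, Complex.norm_exp_ofReal_mul_I, Complex.norm_real, Real.norm_eq_abs, abs_of_pos ht0, mul_one]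
    refine ⟨by rw [habs]; exact lt_of_le_of_lt ht2 hr1, ?_, ?_⟩
    · have : (((τ p.1 : ℝ) : ℂ) * Complex.exp (((σ p.2 : ℝ) : ℂ) * Complex.I)).im
          = τ p.1 * Real.sin (σ p.2) := by
        rw [Complex.exp_mul_I]; simp [← Complex.ofReal_sin, ← Complex.ofReal_cos]
      rw [this]
      exact mul_nonneg ht0.le (Real.sin_nonneg_of_nonneg_of_le_pi hs1 hs2)
    · intro hc
      rw [hc] at habs; simp at habs; exact ht0.ne' habs.symm
  have hFcont : Continuous (Function.uncurry F) := by
    have h1 : ContinuousOn (fun p : ℝ × ℝ =>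
        Φ (((τ p.1 : ℝ) : ℂ) * Complex.exp (((σ p.2 : ℝ) : ℂ) * Complex.I))) Set.univ :=
      hΦcont.comp hψcont.continuousOn (fun p _ => hψmaps p)
    have h2 : Continuous (fun p : ℝ × ℝ =>
        Φ (((τ p.1 : ℝ) : ℂ) * Complex.exp (((σ p.2 : ℝ) : ℂ) * Complex.I))) := by
      rw [← continuousOn_univ]; exact h1
    exact h2.norm
  have hFcont1 : ∀ t, Continuous (fun θ => F t θ) := by
    intro t
    have h := hFcont.comp (Continuous.prodMk_right t)
    exact h
  -- G
  set G : ℝ → ℝ := fun t => ∫ θ in (0:ℝ)..Real.pi, (F t θ)^2 with hGdef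
  have hGcont : Continuous G := by
    apply intervalIntegral.continuous_parametric_intervalIntegral_of_continuous'
    exact hFcont.pow 2
  -- key inequality
  have key : (∫ t in a..b, t * G t) ≤ Energy := by
    rw [hE]
    refine le_trans (le_of_eq ?_)
      (polar_key (fun z => ‖Φ z‖^2) (fun z => sq_nonneg _) (hΦcont.norm.pow 2) hint
        a b ha hab hr1)
    rw [intervalIntegral.integral_of_le hab.le, integral_Ioc_eq_integral_Ioo]
    apply setIntegral_congr_fun measurableSet_Ioo
    intro t ht
    beta_reduce
    have htIcc : t ∈ Set.Icc a b := Set.Ioo_subset_Icc_self ht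
    have hGt : G t = ∫ θ in Set.Ioo (0:ℝ) Real.pi, ‖Φ ((t:ℂ) * Complex.exp ((θ:ℂ) * Complex.I))‖^2 := by
      rw [hGdef]
      simp only
      rw [intervalIntegral.integral_of_le Real.pi_pos.le, integral_Ioc_eq_integral_Ioo]
      apply setIntegral_congr_fun measurableSet_Ioo
      intro θ hθ
      simp only [hFdef]
      rw [hτeq t htIcc, hσeq θ (Set.Ioo_subset_Icc_self hθ)]
    rw [hGt, ← integral_const_mul]
  -- pointwise lower bound
  have lower : ∀ t ∈ Set.Ioo a b, c / (Real.pi * t) < t * G t := by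
    intro t ht
    have ht0 : 0 < t := lt_of_lt_of_le ha (Set.Ioo_subset_Icc_self ht).1
    have htIcc : t ∈ Set.Icc a b := Set.Ioo_subset_Icc_self ht
    have hLt : L t = (∫ θ in (0:ℝ)..Real.pi, F t θ) * t := by
      rw [hL t, intervalIntegral.integral_mul_const]
      congr 1
      apply intervalIntegral.integral_congr
      intro θ hθ
      rw [Set.uIcc_of_le Real.pi_pos.le] at hθ
      simp only [hFdef]
      rw [hτeq t htIcc, hσeq θ hθ]
    have hcs : (∫ θ in (0:ℝ)..Real.pi, F t θ)^2 ≤ Real.pi * G t := cs (hFcont1 t)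
    have hclt : c < L t ^ 2 := hcon t htIcc
    have h2 : c < Real.pi * G t * t^2 := by
      calc c < L t ^ 2 := hclt
        _ = (∫ θ in (0:ℝ)..Real.pi, F t θ)^2 * t^2 := by rw [hLt]; ring
        _ ≤ Real.pi * G t * t^2 := mul_le_mul_of_nonneg_right hcs (sq_nonneg t)
    rw [div_lt_iff₀ (by positivity)]
    nlinarith [h2]
  -- integrability
  have hInt1 : IntervalIntegrable (fun t => t * G t) volume a b :=
    (continuous_id.mul hGcont).intervalIntegrable a b
  have hInt2 : IntervalIntegrable (fun t => c / (Real.pi * t)) volume a b := by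
    apply ContinuousOn.intervalIntegrable
    apply continuousOn_const.div (continuous_const.mul continuous_id).continuousOn
    intro t ht
    rw [Set.uIcc_of_le hab.le] at ht
    have : 0 < t := lt_of_lt_of_le ha ht.1
    exact (mul_pos Real.pi_pos this).ne'
  have pos : 0 < ∫ t in a..b, (t * G t - c / (Real.pi * t)) :=
    intervalIntegral.intervalIntegral_pos_of_pos_on (hInt1.sub hInt2)
      (fun t ht => sub_pos.mpr (lower t ht)) hab
  rw [intervalIntegral.integral_sub hInt1 hInt2] at pos
  have hval : (∫ t in a..b, c / (Real.pi * t)) = Energy := by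
    have e1 : ∀ t : ℝ, c / (Real.pi * t) = (c / Real.pi) * t⁻¹ := fun t => by
      rw [div_mul_eq_div_div]; ring
    simp_rw [e1]
    rw [intervalIntegral.integral_const_mul, integral_inv_of_pos ha hb0]
    have e2 : Real.log (b / a) = Real.log (1 / r) := by
      rw [hadef, hbdef, Real.log_div hb0.ne' (pow_ne_zero 2 hr0.ne'),
        Real.log_pow, Real.log_div one_ne_zero hr0.ne', Real.log_one]
      push_cast
      ring
    rw [e2, hcdef]
    field_simp
  rw [hval] at pos
  linarith
end

section
/- Let A : (0, r₀] → (0, ∞) be a C¹ increasing positive function and C₄ > 0 a constant with C₄ A(r₀) ≤ 1/2, satisfying A'(t) ≥ 2 t^{-1} (A(t) - C₄ A(t)²) for all t ∈ (0, r₀]. Then for all r ∈ (0, r₀], A(r) ≤ (A(r₀) / (1 - C₄ A(r₀))) · (r/r₀)². -/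
/-- If `A` is `C¹`, increasing and positive on `(0, r₀]`,
`C₄ A(r₀) ≤ 1/2`, and `A'(t) ≥ 2 t⁻¹ (A(t) - C₄ A(t)²)`, then
`A(r) ≤ (A(r₀)/(1 - C₄ A(r₀))) (r/r₀)²` for all `r ∈ (0, r₀]`. -/
theorem stmt_6 (A A' : ℝ → ℝ) (r₀ C₄ : ℝ) (hr₀ : 0 < r₀) (hC₄ : 0 < C₄)
    (hpos : ∀ t ∈ Set.Ioc (0:ℝ) r₀, 0 < A t)
    (hmono : MonotoneOn A (Set.Ioc (0:ℝ) r₀))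
    (hsmall : C₄ * A r₀ ≤ 1/2)
    (hA' : ContinuousOn A' (Set.Ioc (0:ℝ) r₀))
    (hderiv : ∀ t ∈ Set.Ioc (0:ℝ) r₀, HasDerivAt A (A' t) t)
    (hineq : ∀ t ∈ Set.Ioc (0:ℝ) r₀, 2 * t⁻¹ * (A t - C₄ * (A t) ^ 2) ≤ A' t) :
    ∀ r ∈ Set.Ioc (0:ℝ) r₀,
      A r ≤ (A r₀ / (1 - C₄ * A r₀)) * (r / r₀) ^ 2 := by
  intro r hr
  have hr₀s : r₀ ∈ Set.Ioc (0:ℝ) r₀ := ⟨hr₀, le_refl _⟩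
  have hden : ∀ t ∈ Set.Ioc (0:ℝ) r₀, (1:ℝ)/2 ≤ 1 - C₄ * A t := by
    intro t ht
    have h1 : A t ≤ A r₀ := hmono ht hr₀s ht.2
    nlinarith [hpos t ht]
  have hdenpos : ∀ t ∈ Set.Ioc (0:ℝ) r₀, 0 < 1 - C₄ * A t :=
    fun t ht => lt_of_lt_of_le (by norm_num) (hden t ht)
  set g : ℝ → ℝ := fun t => A t / (1 - C₄ * A t) with hg
  have hgpos : ∀ t ∈ Set.Ioc (0:ℝ) r₀, 0 < g t :=
    fun t ht => div_pos (hpos t ht) (hdenpos t ht)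
  set B : ℝ → ℝ := fun t => Real.log (g t) - 2 * Real.log t with hB
  have hBd : ∀ t ∈ Set.Ioc (0:ℝ) r₀,
      HasDerivAt B (A' t / (A t * (1 - C₄ * A t)) - 2 * t⁻¹) t := by
    intro t ht
    have hAt := hderiv t ht
    have hd1 : HasDerivAt (fun u => 1 - C₄ * A u) (-(C₄ * A' t)) t := by
      simpa using (hAt.const_mul C₄).const_sub 1
    have hgd : HasDerivAt g
        ((A' t * (1 - C₄ * A t) - A t * (-(C₄ * A' t))) / (1 - C₄ * A t)^2) t :=
      hAt.div hd1 (ne_of_gt (hdenpos t ht))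
    have hlg : HasDerivAt (fun u => Real.log (g u))
        (((A' t * (1 - C₄ * A t) - A t * (-(C₄ * A' t))) / (1 - C₄ * A t)^2) / g t) t :=
      hgd.log (ne_of_gt (hgpos t ht))
    have hlt : HasDerivAt (fun u => 2 * Real.log u) (2 * t⁻¹) t :=
      (Real.hasDerivAt_log (ne_of_gt ht.1)).const_mul 2
    have h := hlg.sub hlt
    refine h.congr_deriv ?_
    have h1 : (1 - C₄ * A t) ≠ 0 := ne_of_gt (hdenpos t ht)
    have h2 : A t ≠ 0 := ne_of_gt (hpos t ht)
    rw [hg]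
    field_simp
    ring
  have hmonoB : MonotoneOn B (Set.Ioc (0:ℝ) r₀) := by
    apply monotoneOn_of_deriv_nonneg (convex_Ioc _ _)
    · intro t ht
      exact ((hBd t ht).continuousAt).continuousWithinAt
    · intro t ht
      rw [interior_Ioc] at ht
      exact ((hBd t (Set.Ioo_subset_Ioc_self ht)).differentiableAt).differentiableWithinAt
    · intro t ht
      rw [interior_Ioc] at ht
      have ht' := Set.Ioo_subset_Ioc_self ht
      rw [(hBd t ht').deriv, sub_nonneg]
      have hi := hineq t ht'
      have hprod : 0 < A t * (1 - C₄ * A t) := mul_pos (hpos t ht') (hdenpos t ht')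
      rw [le_div_iff₀ hprod]
      nlinarith [hi]
  have hBr : B r ≤ B r₀ := hmonoB hr hr₀s hr.2
  have hrhspos : 0 < g r₀ * (r / r₀)^2 := by
    have h1 := hgpos r₀ hr₀s
    have h2 := hr.1
    positivity
  have hlog : Real.log (g r₀ * (r / r₀)^2)
      = Real.log (g r₀) + 2 * (Real.log r - Real.log r₀) := by
    rw [Real.log_mul (ne_of_gt (hgpos r₀ hr₀s)) (by have := hr.1; positivity), Real.log_pow,
      Real.log_div (ne_of_gt hr.1) (ne_of_gt hr₀)]
    push_cast
    ring
  have hlog2 : Real.log (g r) ≤ Real.log (g r₀ * (r / r₀)^2) := by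
    rw [hlog]
    simp only [hB] at hBr
    linarith
  have hgr : g r ≤ g r₀ * (r / r₀)^2 :=
    (Real.log_le_log_iff (hgpos r hr) hrhspos).mp hlog2
  have hAg : A r ≤ g r := by
    rw [hg, le_div_iff₀ (hdenpos r hr)]
    nlinarith [mul_pos hC₄ (mul_pos (hpos r hr) (hpos r hr))]
  calc A r ≤ g r := hAg
    _ ≤ g r₀ * (r / r₀)^2 := hgr
    _ = (A r₀ / (1 - C₄ * A r₀)) * (r / r₀)^2 := rfl
end

section
/- Let λ : [0,a] → [0,∞) be measurable and suppose there exist constants C > 0 and ν > 0 such that for all 0 < r₁ ≤ r₂ ≤ a, ∫₀^{r₁} λ(t)² t dt ≤ C (r₁/r₂)^ν ∫₀^{r₂} λ(t)² t dt. Then for all r ∈ [0,a], ∫₀^r λ(t) dt ≤ C^{1/2} (1 - 2^{-ν/2})^{-1} (log 2)^{1/2} (∫₀^r λ(t)² t dt)^{1/2}. -/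
open MeasureTheory

set_option maxHeartbeats 1000000

/-- dyadic decay lemma: if `λ ≥ 0` is measurable on `[0,a]`,
`∫₀^r λ² t dt` is finite, and for all `0 < r₁ ≤ r₂ ≤ a`,
`∫₀^{r₁} λ² t dt ≤ C (r₁/r₂)^ν ∫₀^{r₂} λ² t dt`, then for all `r ∈ [0,a]`,
`∫₀^r λ dt ≤ C^{1/2} (1 - 2^{-ν/2})⁻¹ (log 2)^{1/2} (∫₀^r λ² t dt)^{1/2}`. -/
theorem stmt_7 (a : ℝ) (ha : 0 < a) (l : ℝ → ℝ) (hlmeas : Measurable l)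
    (hnn : ∀ t, 0 ≤ l t)
    (hint : IntegrableOn (fun t => (l t) ^ 2 * t) (Set.Ioc 0 a))
    (C ν : ℝ) (hC : 0 < C) (hν : 0 < ν)
    (hdecay : ∀ r₁ r₂ : ℝ, 0 < r₁ → r₁ ≤ r₂ → r₂ ≤ a →
      (∫ t in Set.Ioc (0:ℝ) r₁, (l t) ^ 2 * t) ≤
        C * (r₁ / r₂) ^ ν * ∫ t in Set.Ioc (0:ℝ) r₂, (l t) ^ 2 * t) :
    ∀ r ∈ Set.Icc (0:ℝ) a,
      (∫ t in Set.Ioc (0:ℝ) r, l t) ≤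
        Real.sqrt C * (1 - (2:ℝ) ^ (-(ν/2)))⁻¹ * Real.sqrt (Real.log 2) *
          Real.sqrt (∫ t in Set.Ioc (0:ℝ) r, (l t) ^ 2 * t) := by
  intro r hr
  rcases eq_or_lt_of_le hr.1 with hr0 | hr0
  · rw [← hr0]
    simp
  -- main case : 0 < r ≤ a
  have hra : r ≤ a := hr.2
  set I := ∫ t in Set.Ioc (0:ℝ) r, (l t) ^ 2 * t with hI_def
  have hI0 : 0 ≤ I := by
    apply setIntegral_nonneg measurableSet_Ioc
    intro t ht
    have := ht.1
    positivity
  set ρ := (2:ℝ) ^ (-(ν/2)) with hρ_def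
  have hρ0 : 0 < ρ := Real.rpow_pos_of_pos (by norm_num) _
  have hρ1 : ρ < 1 := Real.rpow_lt_one_of_one_lt_of_neg (by norm_num) (by linarith)
  set B := Real.sqrt C * Real.sqrt (Real.log 2) * Real.sqrt I with hB_def
  have hB0 : 0 ≤ B := by positivity
  set s : ℕ → Set ℝ := fun k => Set.Ioc (r / 2 ^ (k+1)) (r / 2 ^ k) with hs_def
  have hs_meas : ∀ k, MeasurableSet (s k) := fun k => measurableSet_Ioc
  -- the union of the dyadic pieces
  have hunion : (⋃ k, s k) = Set.Ioc (0:ℝ) r := by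
    ext t
    simp only [Set.mem_iUnion, hs_def, Set.mem_Ioc]
    constructor
    · rintro ⟨k, h1, h2⟩
      refine ⟨lt_trans (by positivity) h1, h2.trans ?_⟩
      apply div_le_self hr0.le
      exact one_le_pow₀ (by norm_num)
    · rintro ⟨ht0, htr⟩
      have hP : ∃ n : ℕ, r / 2 ^ (n+1) < t := by
        obtain ⟨m, hm⟩ := pow_unbounded_of_one_lt (r / t) (by norm_num : (1:ℝ) < 2)
        refine ⟨m, ?_⟩
        have h2m : (0:ℝ) < 2 ^ (m+1) := by positivity
        rw [div_lt_iff₀ h2m]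
        rw [div_lt_iff₀ ht0] at hm
        have : (2:ℝ) ^ m ≤ 2 ^ (m+1) := by
          apply pow_le_pow_right₀ (by norm_num); omega
        nlinarith
      refine ⟨Nat.find hP, Nat.find_spec hP, ?_⟩
      rcases Nat.eq_zero_or_pos (Nat.find hP) with h0 | hpos
      · rw [h0]; simpa using htr
      · have := Nat.find_min hP (Nat.sub_lt hpos one_pos)
        push_neg at this
        have heq : Nat.find hP - 1 + 1 = Nat.find hP := Nat.succ_pred_eq_of_pos hpos
        rwa [heq] at this
  -- disjointness
  have hdisj : Pairwise (Function.onFun Disjoint s) := by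
    have key : ∀ i j : ℕ, i < j → Disjoint (s i) (s j) := by
      intro i j hij
      rw [Set.disjoint_left]
      intro t hti htj
      have h1 : r / 2 ^ j ≤ r / 2 ^ (i+1) := by
        apply div_le_div_of_nonneg_left hr0.le (by positivity)
        apply pow_le_pow_right₀ (by norm_num); omega
      exact absurd htj.2 (not_le.2 (lt_of_le_of_lt h1 hti.1))
    intro i j hij
    rcases hij.lt_or_gt with h | h
    · exact key i j h
    · exact (key j i h).symm
  -- the key piece bound
  have piece : ∀ k : ℕ, IntegrableOn l (s k) ∧ (∫ t in s k, l t) ≤ B * ρ ^ k := by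
    intro k
    set c := r / 2 ^ (k+1) with hc_def
    set d := r / 2 ^ k with hd_def
    have hc0 : 0 < c := by positivity
    have hd0 : 0 < d := by positivity
    have hcd : c < d := by
      apply div_lt_div_of_pos_left hr0 (by positivity)
      exact pow_lt_pow_right₀ (by norm_num) (by omega)
    have hdr : d ≤ r := by
      apply div_le_self hr0.le
      exact one_le_pow₀ (by norm_num)
    have hssub : s k ⊆ Set.Ioc (0:ℝ) a :=
      Set.Ioc_subset_Ioc hc0.le (hdr.trans hra)
    set f : ℝ → ℝ := fun t => l t * Real.sqrt t with hf_def
    set g : ℝ → ℝ := fun t => (Real.sqrt t)⁻¹ with hg_def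
    have hf_meas : Measurable f := hlmeas.mul Real.continuous_sqrt.measurable
    have hg_meas : Measurable g := Real.continuous_sqrt.measurable.inv
    -- integrability of f^2 on the piece
    have hf2eq : Set.EqOn (fun t => (l t) ^ 2 * t) (fun t => f t ^ 2) (s k) := by
      intro t ht
      simp only [hf_def, mul_pow, Real.sq_sqrt (le_of_lt (lt_trans hc0 ht.1))]
    have hf2int : IntegrableOn (fun t => f t ^ 2) (s k) :=
      ((hint.mono_set hssub).congr_fun hf2eq (hs_meas k))
    have hf2mem : MemLp f 2 (volume.restrict (s k)) :=
      (memLp_two_iff_integrable_sq hf_meas.aestronglyMeasurable).2 hf2int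
    -- integrability of g^2 on the piece
    have hinv_int : IntegrableOn (fun t => t⁻¹) (s k) := by
      have h0 : ∀ x ∈ Set.uIcc c d, x ≠ 0 := by
        intro x hx
        rw [Set.uIcc_of_le hcd.le] at hx
        exact ne_of_gt (lt_of_lt_of_le hc0 hx.1)
      exact (intervalIntegral.intervalIntegrable_inv h0 continuousOn_id).1
    have hg2eq : Set.EqOn (fun t => t⁻¹) (fun t => g t ^ 2) (s k) := by
      intro t ht
      have ht0 : 0 < t := lt_trans hc0 ht.1
      simp only [hg_def, ← Real.sqrt_inv]
      rw [Real.sq_sqrt (by positivity : (0:ℝ) ≤ t⁻¹)]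
    have hg2int : IntegrableOn (fun t => g t ^ 2) (s k) :=
      hinv_int.congr_fun hg2eq (hs_meas k)
    have hg2mem : MemLp g 2 (volume.restrict (s k)) :=
      (memLp_two_iff_integrable_sq hg_meas.aestronglyMeasurable).2 hg2int
    -- integrability of l on the piece
    have hl_int : IntegrableOn l (s k) := by
      have hG : IntegrableOn (fun t => 1 + (l t ^ 2 * t) * c⁻¹) (s k) := by
        apply Integrable.add
        · exact integrableOn_const measure_Ioc_lt_top.ne
        · exact (hint.mono_set hssub).mul_const _
      apply hG.mono' hlmeas.aestronglyMeasurable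
      apply (ae_restrict_iff' (hs_meas k)).2
      apply Filter.Eventually.of_forall
      intro t ht
      have ht0 : 0 < t := lt_trans hc0 ht.1
      have hct : c ≤ t := ht.1.le
      rw [Real.norm_of_nonneg (hnn t)]
      have h1 : (1:ℝ) ≤ t * c⁻¹ := by
        rw [← div_eq_mul_inv]
        exact (one_le_div hc0).2 hct
      have h2 : l t ^ 2 * 1 ≤ l t ^ 2 * (t * c⁻¹) :=
        mul_le_mul_of_nonneg_left h1 (sq_nonneg _)
      nlinarith [sq_nonneg (l t - 1)]
    -- Hölder
    have hconj : (2:ℝ).HolderConjugate 2 := by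
      constructor <;> norm_num
    have hH := integral_mul_le_Lp_mul_Lq_of_nonneg hconj
      (μ := volume.restrict (s k)) (f := f) (g := g)
      (Filter.Eventually.of_forall (fun t => mul_nonneg (hnn t) (Real.sqrt_nonneg t)))
      (Filter.Eventually.of_forall (fun t => by positivity))
      (by rw [show ENNReal.ofReal (2:ℝ) = 2 by norm_num]; exact hf2mem)
      (by rw [show ENNReal.ofReal (2:ℝ) = 2 by norm_num]; exact hg2mem)
    -- rewrite rpow by pow
    have hrpow2 : ∀ x : ℝ, x ^ (2:ℝ) = x ^ 2 := fun x => by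
      rw [show (2:ℝ) = ((2:ℕ):ℝ) by norm_num, Real.rpow_natCast]
    simp only [hrpow2] at hH
    rw [← Real.sqrt_eq_rpow, ← Real.sqrt_eq_rpow] at hH
    -- ∫ f * g = ∫ l
    have hfgl : (∫ t in s k, f t * g t) = ∫ t in s k, l t := by
      apply setIntegral_congr_fun (hs_meas k)
      intro t ht
      have ht0 : 0 < t := lt_trans hc0 ht.1
      have hst : Real.sqrt t ≠ 0 := by positivity
      simp only [hf_def, hg_def]
      field_simp
    -- the log-2 integral
    have hlog : (∫ t in s k, g t ^ 2) = Real.log 2 := by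
      rw [← setIntegral_congr_fun (hs_meas k) hg2eq]
      have : (∫ t in s k, t⁻¹) = ∫ x in c..d, x⁻¹ := by
        rw [intervalIntegral.integral_of_le hcd.le]
      rw [this, integral_inv (by
        rw [Set.uIcc_of_le hcd.le]
        intro h0
        exact absurd h0.1 (not_le.2 hc0))]
      congr 1
      rw [hd_def, hc_def]
      field_simp
      ring
    -- bound ∫ f² by decay
    have hf2bound : (∫ t in s k, f t ^ 2) ≤ C * (ρ ^ k) ^ 2 * I := by
      have h1 : (∫ t in s k, f t ^ 2) ≤ ∫ t in Set.Ioc (0:ℝ) d, (l t)^2 * t := by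
        rw [← setIntegral_congr_fun (hs_meas k) hf2eq]
        apply setIntegral_mono_set (hint.mono_set (Set.Ioc_subset_Ioc le_rfl (hdr.trans hra)))
        · apply (ae_restrict_iff' measurableSet_Ioc).2
          apply Filter.Eventually.of_forall
          intro t ht
          have := ht.1
          positivity
        · exact HasSubset.Subset.eventuallyLE (Set.Ioc_subset_Ioc_left hc0.le)
      have h2 := hdecay d r hd0 hdr hra
      have h3 : (d / r) ^ ν = (ρ ^ k) ^ 2 := by
        have hdrq : d / r = ((2:ℝ) ^ k)⁻¹ := by
          rw [hd_def]; field_simp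
        have h2k : ((2:ℝ) ^ k)⁻¹ = (2:ℝ) ^ (-(k:ℝ)) := by
          rw [← Real.rpow_natCast (2:ℝ) k, ← Real.rpow_neg (by norm_num : (0:ℝ) ≤ 2)]
        rw [hdrq, h2k, hρ_def, ← Real.rpow_natCast ((2:ℝ) ^ (-(ν/2) : ℝ)) k,
          ← Real.rpow_natCast (((2:ℝ) ^ (-(ν/2) : ℝ)) ^ ((k:ℕ):ℝ)) 2,
          ← Real.rpow_mul (by norm_num : (0:ℝ) ≤ 2),
          ← Real.rpow_mul (by norm_num : (0:ℝ) ≤ 2),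
          ← Real.rpow_mul (by norm_num : (0:ℝ) ≤ 2)]
        congr 1
        push_cast
        ring
      rw [← h3]
      calc (∫ t in s k, f t ^ 2) ≤ ∫ t in Set.Ioc (0:ℝ) d, (l t)^2 * t := h1
        _ ≤ C * (d / r) ^ ν * I := h2
    -- conclude the piece bound
    refine ⟨hl_int, ?_⟩
    rw [← hfgl]
    calc (∫ t in s k, f t * g t)
        ≤ Real.sqrt (∫ t in s k, f t ^ 2) * Real.sqrt (∫ t in s k, g t ^ 2) := hH
      _ = Real.sqrt (∫ t in s k, f t ^ 2) * Real.sqrt (Real.log 2) := by rw [hlog]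
      _ ≤ Real.sqrt (C * (ρ ^ k) ^ 2 * I) * Real.sqrt (Real.log 2) := by
          apply mul_le_mul_of_nonneg_right (Real.sqrt_le_sqrt hf2bound) (Real.sqrt_nonneg _)
      _ = B * ρ ^ k := by
          rw [Real.sqrt_mul (mul_nonneg hC.le (sq_nonneg _)) I, Real.sqrt_mul hC.le,
            Real.sqrt_sq (pow_nonneg hρ0.le k)]
          rw [hB_def]; ring
  -- summing up via lintegral
  have hnn_ae : (0:ℝ → ℝ) ≤ᵐ[volume.restrict (Set.Ioc (0:ℝ) r)] l :=
    Filter.Eventually.of_forall hnn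
  have hmain : (∫ t in Set.Ioc (0:ℝ) r, l t) ≤ B * (1 - ρ)⁻¹ := by
    rw [integral_eq_lintegral_of_nonneg_ae hnn_ae hlmeas.aestronglyMeasurable]
    have hsum : Summable (fun k : ℕ => B * ρ ^ k) :=
      (summable_geometric_of_lt_one hρ0.le hρ1).mul_left B
    have hlint : (∫⁻ t in Set.Ioc (0:ℝ) r, ENNReal.ofReal (l t)) ≤
        ENNReal.ofReal (B * (1 - ρ)⁻¹) := by
      rw [← hunion, lintegral_iUnion hs_meas hdisj]
      calc (∑' k, ∫⁻ t in s k, ENNReal.ofReal (l t))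
          = ∑' k, ENNReal.ofReal (∫ t in s k, l t) := by
            congr 1; funext k
            rw [ofReal_integral_eq_lintegral_ofReal (piece k).1
              (Filter.Eventually.of_forall hnn)]
        _ ≤ ∑' k, ENNReal.ofReal (B * ρ ^ k) := by
            apply ENNReal.tsum_le_tsum
            intro k
            exact ENNReal.ofReal_le_ofReal (piece k).2
        _ = ENNReal.ofReal (∑' k, B * ρ ^ k) := by
            rw [ENNReal.ofReal_tsum_of_nonneg (fun k => mul_nonneg hB0 (pow_nonneg hρ0.le k)) hsum]
        _ = ENNReal.ofReal (B * (1 - ρ)⁻¹) := by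
            rw [tsum_mul_left, tsum_geometric_of_lt_one hρ0.le hρ1]
    calc (∫⁻ t in Set.Ioc (0:ℝ) r, ENNReal.ofReal (l t)).toReal
        ≤ (ENNReal.ofReal (B * (1 - ρ)⁻¹)).toReal :=
          ENNReal.toReal_mono ENNReal.ofReal_ne_top hlint
      _ = B * (1 - ρ)⁻¹ := ENNReal.toReal_ofReal (mul_nonneg hB0 (inv_nonneg.2 (by linarith)))
  calc (∫ t in Set.Ioc (0:ℝ) r, l t) ≤ B * (1 - ρ)⁻¹ := hmain
    _ = Real.sqrt C * (1 - ρ)⁻¹ * Real.sqrt (Real.log 2) * Real.sqrt I := by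
        rw [hB_def]; ring
end

section
/- Let J : B → GL(ℝ²ⁿ) be a C¹ field of complex structures on an open set B ⊆ ℝ²ⁿ and h : Ω → B a C² map on an open set Ω ⊆ ℂ satisfying ∂h/∂y = J(h) ∂h/∂x (i.e., h is J-holomorphic). Then the lifted map H(z) = (h(z), ∂h/∂x(z)) ∈ B × ℝ²ⁿ is J⁽¹⁾-holomorphic: ∂H/∂y = J⁽¹⁾(H) ∂H/∂x, where J⁽¹⁾(q,v)(w₁,w₂) = (J(q)w₁, (d_v J)(q)w₁ + J(q)w₂). -/
/-- if `h : Ω → B ⊆ ℝ²ⁿ` is `C²` and `J`-holomorphic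
(`∂h/∂y = J(h) ∂h/∂x`, where `∂h/∂x = dh(1)` and `∂h/∂y = dh(i)`), then the
lift `H(z) = (h(z), ∂h/∂x(z))` is `J⁽¹⁾`-holomorphic:
`∂H/∂y = (J(h) (∂H/∂x)₁, (d_{∂h/∂x} J)(h) (∂H/∂x)₁ + J(h) (∂H/∂x)₂)`. -/
theorem stmt_13 (n : ℕ) (B : Set (Fin (2*n) → ℝ)) (hB : IsOpen B)
    (J : (Fin (2*n) → ℝ) → ((Fin (2*n) → ℝ) →L[ℝ] (Fin (2*n) → ℝ)))
    (hJ : ContDiffOn ℝ 1 J B)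
    (Ω : Set ℂ) (hΩ : IsOpen Ω)
    (h : ℂ → (Fin (2*n) → ℝ)) (hmaps : Set.MapsTo h Ω B)
    (hh : ContDiffOn ℝ 2 h Ω)
    (hCR : ∀ z ∈ Ω, fderiv ℝ h z Complex.I = J (h z) (fderiv ℝ h z 1)) :
    ∀ z ∈ Ω,
      fderiv ℝ (fun w => (h w, fderiv ℝ h w 1)) z Complex.I =
        (J (h z) ((fderiv ℝ (fun w => (h w, fderiv ℝ h w 1)) z 1).1),
          (fderiv ℝ J (h z) (fderiv ℝ h z 1))
              ((fderiv ℝ (fun w => (h w, fderiv ℝ h w 1)) z 1).1)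
            + J (h z) ((fderiv ℝ (fun w => (h w, fderiv ℝ h w 1)) z 1).2)) := by
  intro z hz
  have hzΩ : Ω ∈ nhds z := hΩ.mem_nhds hz
  have hc2 : ContDiffAt ℝ 2 h z := hh.contDiffAt hzΩ
  have hdh : HasFDerivAt h (fderiv ℝ h z) z :=
    (hc2.differentiableAt (by norm_num)).hasFDerivAt
  have hd'c : ContDiffAt ℝ 1 (fderiv ℝ h) z := hc2.fderiv_right (le_refl 2)
  have hA : HasFDerivAt (fderiv ℝ h) (fderiv ℝ (fderiv ℝ h) z) z :=
    (hd'c.differentiableAt one_ne_zero).hasFDerivAt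
  set A := fderiv ℝ (fderiv ℝ h) z with hAdef
  -- derivative of g w = fderiv h w 1
  have hg : HasFDerivAt (fun w => fderiv ℝ h w 1)
      ((fderiv ℝ h z).comp 0 + A.flip 1) z :=
    hA.clm_apply (hasFDerivAt_const (1:ℂ) z)
  have hg' : HasFDerivAt (fun w => fderiv ℝ h w 1) (A.flip 1) z := by
    refine hg.congr_fderiv ?_
    ext v
    simp
  -- J is differentiable at h z
  have hJd : HasFDerivAt J (fderiv ℝ J (h z)) (h z) :=
    ((hJ.contDiffAt (hB.mem_nhds (hmaps hz))).differentiableAt one_ne_zero).hasFDerivAt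
  have hJh : HasFDerivAt (fun w => J (h w)) ((fderiv ℝ J (h z)).comp (fderiv ℝ h z)) z :=
    hJd.comp z hdh
  -- derivative of RHS of CR
  have hφ : HasFDerivAt (fun w => J (h w) (fderiv ℝ h w 1))
      ((J (h z)).comp (A.flip 1)
        + ((fderiv ℝ J (h z)).comp (fderiv ℝ h z)).flip (fderiv ℝ h z 1)) z :=
    hJh.clm_apply hg'
  -- derivative of LHS of CR
  have hψ : HasFDerivAt (fun w => fderiv ℝ h w Complex.I)
      ((fderiv ℝ h z).comp 0 + A.flip Complex.I) z :=
    hA.clm_apply (hasFDerivAt_const (Complex.I) z)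
  have hψ' : HasFDerivAt (fun w => fderiv ℝ h w Complex.I) (A.flip Complex.I) z := by
    refine hψ.congr_fderiv ?_
    ext v
    simp
  have heq : (fun w => fderiv ℝ h w Complex.I) =ᶠ[nhds z]
      (fun w => J (h w) (fderiv ℝ h w 1)) :=
    Filter.eventuallyEq_of_mem hzΩ (fun w hw => hCR w hw)
  have hψ'' : HasFDerivAt (fun w => J (h w) (fderiv ℝ h w 1)) (A.flip Complex.I) z :=
    hψ'.congr_of_eventuallyEq heq.symm
  have hkey : A.flip Complex.I = _ := hψ''.unique hφ
  have hkey1 := congrArg (fun (T : ℂ →L[ℝ] (Fin (2*n) → ℝ)) => T 1) hkey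
  simp only [ContinuousLinearMap.add_apply, ContinuousLinearMap.comp_apply,
    ContinuousLinearMap.flip_apply, ContinuousLinearMap.compL_apply] at hkey1
  have hsym : A Complex.I 1 = A 1 Complex.I :=
    (hc2.isSymmSndFDerivAt (by simp)) Complex.I 1
  -- derivative of the pair
  have hpair : HasFDerivAt (fun w => (h w, fderiv ℝ h w 1))
      ((fderiv ℝ h z).prod (A.flip 1)) z := hdh.prodMk hg'
  rw [hpair.fderiv]
  simp only [ContinuousLinearMap.prod_apply, ContinuousLinearMap.flip_apply]
  refine Prod.ext ?_ ?_
  · exact hCR z hz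
  · rw [hsym, hkey1]; abel
end

section
/- Let U ⊆ ℝ²ⁿ be open, J an almost complex structure on U, α₀ a 1-form on U with dα₀(w, Jw) ≥ C₀‖w‖² for all tangent vectors w and some C₀ > 0, and β = Σⱼ xⱼ dyⱼ the standard primitive of the symplectic form on ℂⁿ. Suppose J⁽¹⁾ is an almost complex structure on U × B₃ (B₃ ⊆ ℂⁿ open) of the form J⁽¹⁾(w₁, w₂) = (J w₁, φ w₁ + J₀ w₂), where ‖φ(q,v)‖ ≤ C₁ for all (q,v) ∈ U × B₃. Then with λ = C₀ C₁^{-2}, the 1-form α = P₁*α₀ + λ P₂*β satisfies dα((w₁,w₂), J⁽¹⁾(w₁,w₂)) ≥ (C₀/2)‖w₁‖² + (λ/2)‖w₂‖², so dα tames J⁽¹⁾. -/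
/-- taming of the lifted structure. With `ω = dα₀` satisfying
`ω(w, Jw) ≥ C₀‖w‖²`, `‖φ‖ ≤ C₁`, `λ = C₀ C₁⁻²`, and `dβ` the standard
symplectic form on `ℂⁿ` (so `dβ(w, w') = Σⱼ (Re wⱼ Im w'ⱼ - Im wⱼ Re w'ⱼ)`),
the form `dα = P₁*ω + λ P₂*dβ` evaluated on `((w₁,w₂), J⁽¹⁾(w₁,w₂))` with
`J⁽¹⁾(w₁,w₂) = (J w₁, φ w₁ + J₀ w₂)` is at least
`(C₀/2)‖w₁‖² + (λ/2)‖w₂‖²`; in particular `dα` tames `J⁽¹⁾`. -/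
theorem stmt_14 (n : ℕ) (C₀ C₁ : ℝ) (hC₀ : 0 < C₀) (hC₁ : 0 < C₁)
    (J : EuclideanSpace ℝ (Fin (2*n)) →L[ℝ] EuclideanSpace ℝ (Fin (2*n)))
    (hJ2 : ∀ w, J (J w) = -w)
    (ω : EuclideanSpace ℝ (Fin (2*n)) →ₗ[ℝ] EuclideanSpace ℝ (Fin (2*n)) →ₗ[ℝ] ℝ)
    (hω : ∀ w, C₀ * ‖w‖ ^ 2 ≤ ω w (J w))
    (φ : EuclideanSpace ℝ (Fin (2*n)) →L[ℝ] EuclideanSpace ℂ (Fin n))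
    (hφ : ‖φ‖ ≤ C₁) :
    ∀ (w₁ : EuclideanSpace ℝ (Fin (2*n))) (w₂ : EuclideanSpace ℂ (Fin n)),
      (C₀ / 2) * ‖w₁‖ ^ 2 + ((C₀ / C₁ ^ 2) / 2) * ‖w₂‖ ^ 2 ≤
        ω w₁ (J w₁) + (C₀ / C₁ ^ 2) *
          ∑ j, ((w₂ j).re * ((φ w₁ + Complex.I • w₂) j).im
            - (w₂ j).im * ((φ w₁ + Complex.I • w₂) j).re) := by
  intro w₁ w₂
  set b : EuclideanSpace ℂ (Fin n) := φ w₁ with hb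
  have hsum : ∑ j, ((w₂ j).re * ((b + Complex.I • w₂) j).im
      - (w₂ j).im * ((b + Complex.I • w₂) j).re)
      = (inner (𝕜 := ℂ) w₂ b).im + ‖w₂‖ ^ 2 := by
    have : (inner (𝕜 := ℂ) w₂ (b + Complex.I • w₂)) =
        inner (𝕜 := ℂ) w₂ b + Complex.I * (‖w₂‖ : ℂ) ^ 2 := by
      rw [inner_add_right, inner_smul_right, inner_self_eq_norm_sq_to_K]
      rfl
    have h2 : (inner (𝕜 := ℂ) w₂ (b + Complex.I • w₂)).im
        = (inner (𝕜 := ℂ) w₂ b).im + ‖w₂‖ ^ 2 := by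
      rw [this]; simp [Complex.add_im, Complex.mul_im]; norm_cast
    rw [← h2, PiLp.inner_apply, Complex.im_sum]
    refine Finset.sum_congr rfl fun j _ => ?_
    simp [RCLike.inner_apply, Complex.mul_im, Complex.conj_re, Complex.conj_im]
    ring
  have hib : |(inner (𝕜 := ℂ) w₂ b).im| ≤ C₁ * ‖w₁‖ * ‖w₂‖ := by
    have h1 : |(inner (𝕜 := ℂ) w₂ b).im| ≤ ‖(inner (𝕜 := ℂ) w₂ b)‖ :=
      Complex.abs_im_le_norm _
    have h2 : ‖(inner (𝕜 := ℂ) w₂ b)‖ ≤ ‖w₂‖ * ‖b‖ := norm_inner_le_norm _ _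
    have h3 : ‖b‖ ≤ C₁ * ‖w₁‖ := by
      calc ‖b‖ ≤ ‖φ‖ * ‖w₁‖ := φ.le_opNorm w₁
        _ ≤ C₁ * ‖w₁‖ := by gcongr
    nlinarith [norm_nonneg w₂, norm_nonneg w₁]
  rw [hsum]
  have hω1 := hω w₁
  have habs := abs_le.1 hib
  have hlam : 0 < C₀ / C₁ ^ 2 := by positivity
  have key : C₀ / C₁ * ‖w₁‖ * ‖w₂‖ ≤ C₀ / 2 * ‖w₁‖ ^ 2 + (C₀ / C₁ ^ 2) / 2 * ‖w₂‖ ^ 2 := by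
    have h := sq_nonneg (C₁ * ‖w₁‖ - ‖w₂‖)
    have : C₁ * ‖w₁‖ * ‖w₂‖ ≤ C₁ ^ 2 / 2 * ‖w₁‖ ^ 2 + 1 / 2 * ‖w₂‖ ^ 2 := by nlinarith
    have hC := mul_le_mul_of_nonneg_left this (le_of_lt hlam)
    calc C₀ / C₁ * ‖w₁‖ * ‖w₂‖ = (C₀ / C₁ ^ 2) * (C₁ * ‖w₁‖ * ‖w₂‖) := by
          field_simp
      _ ≤ (C₀ / C₁ ^ 2) * (C₁ ^ 2 / 2 * ‖w₁‖ ^ 2 + 1 / 2 * ‖w₂‖ ^ 2) := hC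
      _ = C₀ / 2 * ‖w₁‖ ^ 2 + (C₀ / C₁ ^ 2) / 2 * ‖w₂‖ ^ 2 := by
          field_simp
  have hlow : -(C₀ / C₁ * ‖w₁‖ * ‖w₂‖) ≤ (C₀ / C₁ ^ 2) * (inner (𝕜 := ℂ) w₂ b).im := by
    have := mul_le_mul_of_nonneg_left habs.1 (le_of_lt hlam)
    calc -(C₀ / C₁ * ‖w₁‖ * ‖w₂‖) = (C₀ / C₁ ^ 2) * (-(C₁ * ‖w₁‖ * ‖w₂‖)) := by
          field_simp
      _ ≤ _ := this
  nlinarith [mul_le_mul_of_nonneg_left (le_refl (‖w₂‖^2)) (le_of_lt hlam)]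
end

section
/- Suppose a family of smooth curves with lengths L(r) and enclosed areas A(r) (0 < r < 1) on a surface satisfies the two isoperimetric inequalities L(r)² ≥ 2πC₃ A(r)² and L(r)² ≥ 4π(A(r) − C₄A(r)²) together with the monotonicity inequality A'(r) ≥ (2πr)^{-1}L(r)², where A is positive, increasing, and C¹ on (0,1), and C₃, C₄ > 0. Then with r₀ = (1/2)e^{-2C₄/C₃}, one has A(r) ≤ 4 C₄^{-1} e^{4C₄/C₃} r² for all r ∈ (0, r₀], and consequently lim sup_{r→0} (πr²)^{-1} A(r) ≤ 4π^{-1}C₄^{-1}e^{4C₄/C₃}. -/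
set_option maxHeartbeats 1000000 in
/-- quantitative decay from the two isoperimetric inequalities
`L² ≥ 2πC₃A²`, `L² ≥ 4π(A - C₄A²)` and the monotonicity `A' ≥ (2πr)⁻¹L²` for a
positive increasing `C¹` function `A` on `(0,1)`: with
`r₀ = (1/2)e^{-2C₄/C₃}`, one has `A(r) ≤ 4 C₄⁻¹ e^{4C₄/C₃} r²` on `(0, r₀]`,
and consequently `limsup_{r→0⁺} (πr²)⁻¹ A(r) ≤ 4 π⁻¹ C₄⁻¹ e^{4C₄/C₃}`. -/
theorem stmt_19 (A A' L : ℝ → ℝ) (C₃ C₄ : ℝ) (hC₃ : 0 < C₃) (hC₄ : 0 < C₄)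
    (hpos : ∀ r ∈ Set.Ioo (0:ℝ) 1, 0 < A r)
    (hmono : MonotoneOn A (Set.Ioo (0:ℝ) 1))
    (hderiv : ∀ r ∈ Set.Ioo (0:ℝ) 1, HasDerivAt A (A' r) r)
    (hA'cont : ContinuousOn A' (Set.Ioo (0:ℝ) 1))
    (hiso1 : ∀ r ∈ Set.Ioo (0:ℝ) 1, 2 * Real.pi * C₃ * (A r) ^ 2 ≤ (L r) ^ 2)
    (hiso2 : ∀ r ∈ Set.Ioo (0:ℝ) 1,
      4 * Real.pi * (A r - C₄ * (A r) ^ 2) ≤ (L r) ^ 2)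
    (hmonot : ∀ r ∈ Set.Ioo (0:ℝ) 1, (2 * Real.pi * r)⁻¹ * (L r) ^ 2 ≤ A' r) :
    (∀ r ∈ Set.Ioc (0:ℝ) ((1/2) * Real.exp (-(2 * C₄ / C₃))),
      A r ≤ 4 * C₄⁻¹ * Real.exp (4 * C₄ / C₃) * r ^ 2) ∧
    Filter.limsup (fun r : ℝ => (Real.pi * r ^ 2)⁻¹ * A r)
        (nhdsWithin 0 (Set.Ioi 0)) ≤
      4 * Real.pi⁻¹ * C₄⁻¹ * Real.exp (4 * C₄ / C₃) := by
  have hπ : (0:ℝ) < Real.pi := Real.pi_pos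
  set r₀ : ℝ := (1/2) * Real.exp (-(2 * C₄ / C₃)) with hr₀def
  have hexp_pos : 0 < Real.exp (-(2 * C₄ / C₃)) := Real.exp_pos _
  have hr₀pos : 0 < r₀ := by positivity
  have hexp_le1 : Real.exp (-(2 * C₄ / C₃)) ≤ 1 := by
    rw [Real.exp_le_one_iff]
    have : 0 ≤ 2 * C₄ / C₃ := by positivity
    linarith
  have hr₀half : r₀ ≤ 1/2 := by
    rw [hr₀def]; nlinarith
  have hr₀lt1 : r₀ < 1 := by linarith
  -- key derivative lower bounds
  have hq1 : ∀ x ∈ Set.Ioo (0:ℝ) 1, C₃ * (A x) ^ 2 / x ≤ A' x := by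
    intro x hx
    have hx0 : 0 < x := hx.1
    have h1 : (2 * Real.pi * x)⁻¹ * (2 * Real.pi * C₃ * (A x) ^ 2)
        ≤ (2 * Real.pi * x)⁻¹ * (L x) ^ 2 :=
      mul_le_mul_of_nonneg_left (hiso1 x hx) (by positivity)
    have h2 : (2 * Real.pi * x)⁻¹ * (2 * Real.pi * C₃ * (A x) ^ 2)
        = C₃ * (A x) ^ 2 / x := by
      field_simp
    rw [h2] at h1
    exact h1.trans (hmonot x hx)
  have hq2 : ∀ x ∈ Set.Ioo (0:ℝ) 1, 2 / x * (A x - C₄ * (A x) ^ 2) ≤ A' x := by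
    intro x hx
    have hx0 : 0 < x := hx.1
    have h1 : (2 * Real.pi * x)⁻¹ * (4 * Real.pi * (A x - C₄ * (A x) ^ 2))
        ≤ (2 * Real.pi * x)⁻¹ * (L x) ^ 2 :=
      mul_le_mul_of_nonneg_left (hiso2 x hx) (by positivity)
    have h2 : (2 * Real.pi * x)⁻¹ * (4 * Real.pi * (A x - C₄ * (A x) ^ 2))
        = 2 / x * (A x - C₄ * (A x) ^ 2) := by
      field_simp
      ring
    rw [h2] at h1
    exact h1.trans (hmonot x hx)
  have hA'0 : ∀ x ∈ Set.Ioo (0:ℝ) 1, 0 ≤ A' x := by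
    intro x hx
    have := hq1 x hx
    have h0 : 0 ≤ C₃ * (A x) ^ 2 / x := div_nonneg (by positivity) hx.1.le
    linarith
  have hAcont : ContinuousOn A (Set.Ioo (0:ℝ) 1) := fun x hx =>
    (hderiv x hx).continuousAt.continuousWithinAt
  have hr₀mem : r₀ ∈ Set.Ioo (0:ℝ) 1 := ⟨hr₀pos, hr₀lt1⟩
  have hAr₀pos : 0 < A r₀ := hpos r₀ hr₀mem
  -- Step 1 : C₄ * A r₀ ≤ 1/2
  have hstep1 : C₄ * A r₀ ≤ 1/2 := by
    set g : ℝ → ℝ := fun s => C₃ * Real.log s + (A s)⁻¹ with hgdef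
    have hsub : Set.Icc r₀ (3/4 : ℝ) ⊆ Set.Ioo (0:ℝ) 1 := by
      intro s hs
      exact ⟨lt_of_lt_of_le hr₀pos hs.1, lt_of_le_of_lt hs.2 (by norm_num)⟩
    have hganti : AntitoneOn g (Set.Icc r₀ (3/4 : ℝ)) := by
      apply antitoneOn_of_hasDerivWithinAt_nonpos (f' := fun s =>
          C₃ * s⁻¹ + (-(A' s) / (A s) ^ 2)) (convex_Icc _ _)
      · apply ContinuousOn.add
        · exact continuousOn_const.mul (Real.continuousOn_log.mono (by
            intro s hs
            exact ne_of_gt (lt_of_lt_of_le hr₀pos hs.1)))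
        · exact ((hAcont.mono hsub).inv₀ (fun s hs => ne_of_gt (hpos s (hsub hs))))
      · intro s hs
        rw [interior_Icc] at hs
        have hsm : s ∈ Set.Ioo (0:ℝ) 1 := hsub ⟨hs.1.le, hs.2.le⟩
        have h1 : HasDerivAt g (C₃ * s⁻¹ + (-(A' s) / (A s) ^ 2)) s := by
          exact ((Real.hasDerivAt_log (ne_of_gt hsm.1)).const_mul C₃).add
            ((hderiv s hsm).inv (ne_of_gt (hpos s hsm)))
        exact h1.hasDerivWithinAt
      · intro s hs
        rw [interior_Icc] at hs
        have hsm : s ∈ Set.Ioo (0:ℝ) 1 := hsub ⟨hs.1.le, hs.2.le⟩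
        have hAs : 0 < A s := hpos s hsm
        have hkey := hq1 s hsm
        have h3 : C₃ * s⁻¹ ≤ A' s / (A s) ^ 2 := by
          rw [le_div_iff₀ (by positivity)]
          have : C₃ * s⁻¹ * (A s) ^ 2 = C₃ * (A s) ^ 2 / s := by
            field_simp
          rw [this]; exact hkey
        have : -(A' s) / (A s) ^ 2 = -(A' s / (A s) ^ 2) := by ring
        rw [this]; linarith
    have hmem34 : (3/4 : ℝ) ∈ Set.Icc r₀ (3/4 : ℝ) := ⟨by linarith, le_refl _⟩
    have hmemr₀ : r₀ ∈ Set.Icc r₀ (3/4 : ℝ) := ⟨le_refl _, by linarith⟩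
    have hineq : g (3/4) ≤ g r₀ := hganti hmemr₀ hmem34 (by linarith)
    have hA34pos : 0 < A (3/4 : ℝ) := hpos _ (hsub hmem34)
    have hlogr₀ : Real.log r₀ = Real.log (1/2) + (-(2 * C₄ / C₃)) := by
      rw [hr₀def, Real.log_mul (by norm_num) (ne_of_gt hexp_pos), Real.log_exp]
    have hlogdiff : Real.log (3/4 : ℝ) - Real.log (1/2 : ℝ) = Real.log (3/2 : ℝ) := by
      rw [← Real.log_div (by norm_num) (by norm_num)]
      norm_num
    have hlog32 : 0 ≤ Real.log (3/2 : ℝ) := Real.log_nonneg (by norm_num)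
    have hinv : 2 * C₄ ≤ (A r₀)⁻¹ := by
      have h34inv : 0 < (A (3/4 : ℝ))⁻¹ := by positivity
      simp only [hgdef] at hineq
      rw [hlogr₀] at hineq
      have hC₃mul : C₃ * (2 * C₄ / C₃) = 2 * C₄ := by field_simp
      nlinarith [mul_le_mul_of_nonneg_left hlog32 hC₃.le]
    have h1 : 2 * C₄ * A r₀ ≤ (A r₀)⁻¹ * A r₀ :=
      mul_le_mul_of_nonneg_right hinv hAr₀pos.le
    rw [inv_mul_cancel₀ (ne_of_gt hAr₀pos)] at h1
    linarith
  -- Step 2 : quadratic decay on (0, r₀]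
  have key : ∀ r ∈ Set.Ioc (0:ℝ) r₀,
      A r ≤ 4 * C₄⁻¹ * Real.exp (4 * C₄ / C₃) * r ^ 2 := by
    intro r hr
    have hrpos : 0 < r := hr.1
    have hrr₀ : r ≤ r₀ := hr.2
    have hsub : Set.Icc r r₀ ⊆ Set.Ioo (0:ℝ) 1 := by
      intro x hx
      exact ⟨lt_of_lt_of_le hrpos hx.1, lt_of_le_of_lt hx.2 hr₀lt1⟩
    have hAle : ∀ x ∈ Set.Icc r r₀, A x ≤ A r₀ :=
      fun x hx => hmono (hsub hx) hr₀mem hx.2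
    have hfrac : ∀ x ∈ Set.Icc r r₀, 1/2 ≤ 1 - C₄ * A x := by
      intro x hx
      have h1 : C₄ * A x ≤ C₄ * A r₀ :=
        mul_le_mul_of_nonneg_left (hAle x hx) hC₄.le
      linarith
    set h : ℝ → ℝ := fun x =>
      Real.log (A x) - Real.log (1 - C₄ * A x) - 2 * Real.log x with hhdef
    have hhmono : MonotoneOn h (Set.Icc r r₀) := by
      apply monotoneOn_of_hasDerivWithinAt_nonneg (f' := fun x =>
          A' x / A x - (-(C₄ * A' x)) / (1 - C₄ * A x) - 2 * x⁻¹) (convex_Icc _ _)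
      · apply ContinuousOn.sub
        apply ContinuousOn.sub
        · exact (hAcont.mono hsub).log (fun x hx => ne_of_gt (hpos x (hsub hx)))
        · apply ContinuousOn.log
          · exact continuousOn_const.sub (continuousOn_const.mul (hAcont.mono hsub))
          · intro x hx
            have := hfrac x hx
            intro hc; rw [hc] at this; norm_num at this
        · exact continuousOn_const.mul (Real.continuousOn_log.mono (by
            intro x hx
            exact ne_of_gt (lt_of_lt_of_le hrpos hx.1)))
      · intro x hx
        rw [interior_Icc] at hx
        have hxI : x ∈ Set.Icc r r₀ := ⟨hx.1.le, hx.2.le⟩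
        have hxm : x ∈ Set.Ioo (0:ℝ) 1 := hsub hxI
        have hAx : 0 < A x := hpos x hxm
        have hb : (0:ℝ) < 1 - C₄ * A x := lt_of_lt_of_le (by norm_num) (hfrac x hxI)
        have hd1 : HasDerivAt (fun y => Real.log (A y)) (A' x / A x) x :=
          (hderiv x hxm).log (ne_of_gt hAx)
        have hd2 : HasDerivAt (fun y => (1:ℝ) - C₄ * A y) (-(C₄ * A' x)) x := by
          exact ((hasDerivAt_const x (1:ℝ)).sub ((hderiv x hxm).const_mul C₄)).congr_deriv (by ring)
        have hd3 : HasDerivAt (fun y => Real.log (1 - C₄ * A y))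
            ((-(C₄ * A' x)) / (1 - C₄ * A x)) x := hd2.log (ne_of_gt hb)
        have hd4 : HasDerivAt (fun y => 2 * Real.log y) (2 * x⁻¹) x :=
          (Real.hasDerivAt_log (ne_of_gt hxm.1)).const_mul 2
        exact ((hd1.sub hd3).sub hd4).hasDerivWithinAt
      · intro x hx
        rw [interior_Icc] at hx
        have hxI : x ∈ Set.Icc r r₀ := ⟨hx.1.le, hx.2.le⟩
        have hxm : x ∈ Set.Ioo (0:ℝ) 1 := hsub hxI
        have hAx : 0 < A x := hpos x hxm
        have hb : (0:ℝ) < 1 - C₄ * A x := lt_of_lt_of_le (by norm_num) (hfrac x hxI)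
        have hkey := hq2 x hxm
        have hrw : A' x / A x - (-(C₄ * A' x)) / (1 - C₄ * A x) - 2 * x⁻¹
            = (A' x * (1 - C₄ * A x) + C₄ * A' x * A x
                - 2 * x⁻¹ * (A x * (1 - C₄ * A x))) / (A x * (1 - C₄ * A x)) := by
          field_simp [hb.ne', hAx.ne', hxm.1.ne', (show 1 - A x * C₄ ≠ 0 by rw [mul_comm]; exact hb.ne')]
          ring
        rw [hrw]
        apply div_nonneg _ (by positivity)
        have h1 : 2 / x * (A x - C₄ * (A x) ^ 2) = 2 * x⁻¹ * (A x * (1 - C₄ * A x)) := by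
          field_simp
        rw [h1] at hkey
        nlinarith
    have hineq : h r ≤ h r₀ := hhmono ⟨le_refl _, hrr₀⟩ ⟨hrr₀, le_refl _⟩ hrr₀
    -- unpack the log inequality
    have hAr : 0 < A r := hpos r (hsub ⟨le_refl _, hrr₀⟩)
    have hbr : (0:ℝ) < 1 - C₄ * A r :=
      lt_of_lt_of_le (by norm_num) (hfrac r ⟨le_refl _, hrr₀⟩)
    have hbr₀ : (0:ℝ) < 1 - C₄ * A r₀ :=
      lt_of_lt_of_le (by norm_num) (hfrac r₀ ⟨hrr₀, le_refl _⟩)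
    have hlhs : Real.log (A r) - Real.log (1 - C₄ * A r)
        = Real.log (A r / (1 - C₄ * A r)) :=
      (Real.log_div (ne_of_gt hAr) (ne_of_gt hbr)).symm
    have hrhs : Real.log (A r₀) - Real.log (1 - C₄ * A r₀)
          - 2 * Real.log r₀ + 2 * Real.log r
        = Real.log (A r₀ * r ^ 2 / ((1 - C₄ * A r₀) * r₀ ^ 2)) := by
      rw [Real.log_div (by positivity) (by positivity),
        Real.log_mul (ne_of_gt hAr₀pos) (by positivity),
        Real.log_mul (ne_of_gt hbr₀) (by positivity),
        Real.log_pow, Real.log_pow]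
      push_cast
      ring
    have hloglog : Real.log (A r / (1 - C₄ * A r))
        ≤ Real.log (A r₀ * r ^ 2 / ((1 - C₄ * A r₀) * r₀ ^ 2)) := by
      rw [← hlhs, ← hrhs]
      simp only [hhdef] at hineq
      linarith
    have hfinal1 : A r / (1 - C₄ * A r)
        ≤ A r₀ * r ^ 2 / ((1 - C₄ * A r₀) * r₀ ^ 2) :=
      (Real.log_le_log_iff (by positivity) (by positivity)).mp hloglog
    have hfinal0 : A r ≤ A r / (1 - C₄ * A r) := by
      rw [le_div_iff₀ hbr]
      nlinarith [mul_pos hC₄ (mul_pos hAr hAr)]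
    -- numerical endgame
    have e1 : r₀ ^ 2 * Real.exp (4 * C₄ / C₃) = 1/4 := by
      have h2 : Real.exp (-(2 * C₄ / C₃)) ^ 2 * Real.exp (4 * C₄ / C₃) = 1 := by
        rw [sq, ← Real.exp_add, ← Real.exp_add,
          show -(2 * C₄ / C₃) + -(2 * C₄ / C₃) + 4 * C₄ / C₃ = 0 by ring,
          Real.exp_zero]
      calc r₀ ^ 2 * Real.exp (4 * C₄ / C₃)
          = (1/4) * (Real.exp (-(2 * C₄ / C₃)) ^ 2 * Real.exp (4 * C₄ / C₃)) := by
            rw [hr₀def]; ring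
        _ = 1/4 := by rw [h2]; norm_num
    have hr₀sq : r₀ ^ 2 = (4 * Real.exp (4 * C₄ / C₃))⁻¹ := by
      rw [inv_eq_one_div, eq_div_iff (by positivity)]
      rw [show r₀ ^ 2 * (4 * Real.exp (4 * C₄ / C₃))
          = 4 * (r₀ ^ 2 * Real.exp (4 * C₄ / C₃)) by ring, e1]
      norm_num
    have hfinal2 : A r₀ * r ^ 2 / ((1 - C₄ * A r₀) * r₀ ^ 2)
        ≤ 4 * C₄⁻¹ * Real.exp (4 * C₄ / C₃) * r ^ 2 := by
      have hc1 : C₄ * A r₀ ≤ 1 - C₄ * A r₀ := by linarith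
      have hc2 : A r₀ ≤ C₄⁻¹ * (1 - C₄ * A r₀) := by
        have := mul_le_mul_of_nonneg_left hc1 (le_of_lt (inv_pos.mpr hC₄))
        rwa [show C₄⁻¹ * (C₄ * A r₀) = (C₄⁻¹ * C₄) * A r₀ by ring,
          inv_mul_cancel₀ (ne_of_gt hC₄), one_mul] at this
      calc A r₀ * r ^ 2 / ((1 - C₄ * A r₀) * r₀ ^ 2)
          ≤ (C₄⁻¹ * (1 - C₄ * A r₀)) * r ^ 2 / ((1 - C₄ * A r₀) * r₀ ^ 2) := by
            gcongr
        _ = C₄⁻¹ * r ^ 2 / r₀ ^ 2 := by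
            rw [div_eq_div_iff (by positivity) (by positivity)]
            ring
        _ = 4 * C₄⁻¹ * Real.exp (4 * C₄ / C₃) * r ^ 2 := by
            rw [hr₀sq, div_eq_mul_inv, inv_inv]
            ring
    exact hfinal0.trans (hfinal1.trans hfinal2)
  refine ⟨key, ?_⟩
  -- limsup part
  have hmem : Set.Ioo (0:ℝ) r₀ ∈ nhdsWithin 0 (Set.Ioi 0) :=
    Ioo_mem_nhdsGT_of_mem ⟨le_refl _, hr₀pos⟩
  have hev : ∀ᶠ x in nhdsWithin (0:ℝ) (Set.Ioi 0),
      (fun r : ℝ => (Real.pi * r ^ 2)⁻¹ * A r) x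
        ≤ 4 * Real.pi⁻¹ * C₄⁻¹ * Real.exp (4 * C₄ / C₃) := by
    apply Filter.eventually_of_mem hmem
    intro x hx
    have hxpos : 0 < x := hx.1
    have hk := key x ⟨hx.1, hx.2.le⟩
    have h1 : (Real.pi * x ^ 2)⁻¹ * A x
        ≤ (Real.pi * x ^ 2)⁻¹ * (4 * C₄⁻¹ * Real.exp (4 * C₄ / C₃) * x ^ 2) :=
      mul_le_mul_of_nonneg_left hk (by positivity)
    have h2 : (Real.pi * x ^ 2)⁻¹ * (4 * C₄⁻¹ * Real.exp (4 * C₄ / C₃) * x ^ 2)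
        = 4 * Real.pi⁻¹ * C₄⁻¹ * Real.exp (4 * C₄ / C₃) := by
      field_simp
    rw [h2] at h1
    exact h1
  have hev0 : ∀ᶠ x in nhdsWithin (0:ℝ) (Set.Ioi 0),
      (0:ℝ) ≤ (fun r : ℝ => (Real.pi * r ^ 2)⁻¹ * A r) x := by
    apply Filter.eventually_of_mem hmem
    intro x hx
    have hxm : x ∈ Set.Ioo (0:ℝ) 1 := ⟨hx.1, hx.2.trans hr₀lt1⟩
    have := hpos x hxm
    have hxpos : 0 < x := hx.1
    positivity
  exact Filter.limsup_le_of_le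
    (Filter.isCoboundedUnder_le_of_eventually_le _ hev0) hev
end
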